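/- arXiv:1005.0719 — 10 statements merged into one kernel-verified Lean document; each statement's English description precedes it below -/
import Mathlib

section
/- Let A be a pervasive uniform algebra on a compact Hausdorff space X (i.e., for every proper nonempty closed subset F ⊊ X, the restriction algebra A|F is dense in C(F)). If A is a proper subalgebra of C(X), then A is analytic: every f ∈ A that vanishes on some nonempty open subset of X is identically zero. -/
open Set

variable {X : Type} [TopologicalSpace X] [CompactSpace X] [T2Space X]

/-- A uniform algebra `A` on `X` is pervasive if for every nonempty proper closed subset
`F` of `X`, the restrictions of elements of `A` to `F` are dense in `C(F, ℂ)`. -/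
def Pervasive (A : Subalgebra ℂ C(X, ℂ)) : Prop :=
  ∀ F : Set X, IsClosed F → F.Nonempty → F ≠ Set.univ →
    Dense ((fun f : C(X, ℂ) => f.restrict F) '' (A : Set C(X, ℂ)))

set_option linter.unusedSectionVars false

-- truncation lemma
lemma trunc_exists (k : C(X, ℂ)) (ε : ℝ) (hε : 0 < ε) :
    ∃ k' : C(X, ℂ), (∀ x, ‖k x - k' x‖ ≤ ε) ∧ (∀ x, ‖k x‖ ≤ ε → k' x = 0) := by
  have hm : ∀ x, (0:ℝ) < max ε ‖k x‖ := fun x => lt_max_of_lt_left hε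
  refine ⟨⟨fun x => (1 - ε / max ε ‖k x‖) • k x, ?_⟩, ?_, ?_⟩
  · refine Continuous.smul (f := fun x => 1 - ε / max ε ‖k x‖) (g := fun x => k x) ?_ ?_
    · exact continuous_const.sub
        (continuous_const.div (continuous_const.max k.continuous.norm) fun x => (hm x).ne')
    · exact k.continuous
  · intro x
    have h1 : k x - (1 - ε / max ε ‖k x‖) • k x = (ε / max ε ‖k x‖) • k x := by
      rw [sub_smul, one_smul, sub_sub_cancel]
    simp only [ContinuousMap.coe_mk, h1, norm_smul, Real.norm_eq_abs]
    have hc : 0 ≤ ε / max ε ‖k x‖ := div_nonneg hε.le (hm x).le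
    rw [abs_of_nonneg hc, div_mul_eq_mul_div, div_le_iff₀ (hm x)]
    have : ‖k x‖ ≤ max ε ‖k x‖ := le_max_right _ _
    nlinarith [norm_nonneg (k x)]
  · intro x hx
    show (1 - ε / max ε ‖k x‖) • k x = 0
    rw [max_eq_left hx, div_self hε.ne', sub_self, zero_smul]

-- glue lemma: divide k' by g where g nonvanishing on a closed set K ⊇ supp k'
lemma glue_exists (k' g : C(X, ℂ)) (K : Set X) (hK : IsClosed K)
    (hsupp : closure {x | k' x ≠ 0} ⊆ K) (hg : ∀ x ∈ K, g x ≠ 0) :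
    ∃ h' : C(X, ℂ), k' = g * h' := by
  have hzero : ∀ x ∉ K, k' x = 0 := fun x hx => by
    by_contra h
    exact hx (hsupp (subset_closure h))
  have hcont : Continuous fun x => if g x = 0 then 0 else k' x / g x := by
    rw [continuous_iff_continuousAt]
    intro x
    by_cases hgx : g x = 0
    · have hxK : x ∉ K := fun h => hg x h hgx
      have hev : ∀ᶠ y in nhds x, (if g y = 0 then (0:ℂ) else k' y / g y) = 0 := by
        filter_upwards [hK.isOpen_compl.mem_nhds hxK] with y hy
        by_cases hgy : g y = 0
        · simp [hgy]
        · simp [hgy, hzero y hy]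
      exact ContinuousAt.congr continuousAt_const (by filter_upwards [hev] with y hy using hy.symm)
    · have hev : ∀ᶠ y in nhds x, g y ≠ 0 :=
        (g.continuous.continuousAt).eventually_ne hgx
      have : ContinuousAt (fun y => k' y / g y) x :=
        (k'.continuous.continuousAt).div (g.continuous.continuousAt) hgx
      apply this.congr
      filter_upwards [hev] with y hy
      simp [hy]
  refine ⟨⟨_, hcont⟩, ?_⟩
  ext x
  by_cases hgx : g x = 0
  · have hxK : x ∉ K := fun h => hg x h hgx
    simp [hzero x hxK, hgx]
  · simp [ContinuousMap.mul_apply, hgx, mul_div_cancel₀ _ hgx]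

lemma exists_nonvanishing (J : Set C(X, ℂ)) (h0 : (0 : C(X, ℂ)) ∈ J)
    (hadd : ∀ a ∈ J, ∀ b ∈ J, a + b ∈ J)
    (hmul : ∀ a ∈ J, ∀ h : C(X, ℂ), a * h ∈ J)
    (K : Set X) (hK : IsCompact K)
    (hpt : ∀ x ∈ K, ∃ g ∈ J, g x ≠ 0) :
    ∃ g ∈ J, ∀ x ∈ K, g x ≠ 0 := by
  choose gg hggJ hggne using hpt
  have hcover : K ⊆ ⋃ i : K, {y | gg i.1 i.2 y ≠ 0} := fun x hx =>
    mem_iUnion.2 ⟨⟨x, hx⟩, hggne x hx⟩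
  obtain ⟨t, ht⟩ := hK.elim_finite_subcover (fun i : K => {y | gg i.1 i.2 y ≠ 0})
    (fun i => isOpen_ne.preimage (gg i.1 i.2).continuous) hcover
  refine ⟨∑ i ∈ t, gg i.1 i.2 * star (gg i.1 i.2), ?_, ?_⟩
  · apply Finset.sum_induction _ (· ∈ J) (fun a b ha hb => hadd a ha b hb) h0
    exact fun i _ => hmul _ (hggJ i.1 i.2) _
  · intro x hx
    obtain ⟨i, hit, hiv⟩ := mem_iUnion₂.1 (ht hx)
    have heval : (∑ i ∈ t, gg i.1 i.2 * star (gg i.1 i.2)) x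
        = ((∑ i ∈ t, Complex.normSq (gg i.1 i.2 x) : ℝ) : ℂ) := by
      push_cast
      rw [ContinuousMap.sum_apply]
      refine Finset.sum_congr rfl fun j _ => ?_
      rw [ContinuousMap.mul_apply, ContinuousMap.star_apply, Complex.star_def,
        Complex.mul_conj]
    rw [heval]
    rw [Complex.ofReal_ne_zero]
    have hpos : 0 < ∑ i ∈ t, Complex.normSq (gg i.1 i.2 x) := by
      apply Finset.sum_pos' (fun j _ => Complex.normSq_nonneg _)
      exact ⟨i, hit, Complex.normSq_pos.2 hiv⟩
    exact hpos.ne'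

/-- A proper pervasive uniform algebra is analytic: every element vanishing on a nonempty
open set is identically zero. -/
theorem stmt_0 (A : Subalgebra ℂ C(X, ℂ))
    (hclosed : IsClosed (A : Set C(X, ℂ)))
    (hsep : ∀ x y : X, x ≠ y → ∃ f ∈ A, f x ≠ f y)
    (hperv : Pervasive A) (hproper : A ≠ ⊤) :
    ∀ f ∈ A, ∀ U : Set X, IsOpen U → U.Nonempty → (∀ x ∈ U, f x = 0) → f = 0 := by
  intro f hfA U hU hUne hfU
  by_contra hf
  have hAcl : closure (A : Set C(X, ℂ)) = A := hclosed.closure_eq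
  -- approximation on closed proper subsets
  have hApprox : ∀ F : Set X, IsClosed F → F.Nonempty → F ≠ univ →
      ∀ h : C(X, ℂ), ∀ ε : ℝ, 0 < ε → ∃ a ∈ A, ∀ x ∈ F, ‖h x - a x‖ < ε := by
    intro F hFc hFne hFuniv h ε hε
    haveI : CompactSpace F := isCompact_iff_compactSpace.1 hFc.isCompact
    have hdense := hperv F hFc hFne hFuniv
    obtain ⟨y, hyball, hyim⟩ := (Metric.dense_iff.1 hdense (h.restrict F) ε hε)
    obtain ⟨a, haA, hay⟩ := hyim
    refine ⟨a, haA, fun x hx => ?_⟩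
    have h1 : dist (a.restrict F) (h.restrict F) < ε := by
      rw [← hay] at hyball
      simpa [Metric.mem_ball] using hyball
    calc ‖h x - a x‖ = dist ((a.restrict F) ⟨x, hx⟩) ((h.restrict F) ⟨x, hx⟩) := by
          simp [ContinuousMap.restrict_apply, dist_eq_norm, norm_sub_rev]
      _ ≤ dist (a.restrict F) (h.restrict F) := ContinuousMap.dist_apply_le_dist _
      _ < ε := h1
  set J : Set C(X, ℂ) := {g | ∀ h : C(X, ℂ), g * h ∈ A} with hJdef
  have hJ0 : (0 : C(X, ℂ)) ∈ J := fun h => by rw [zero_mul]; exact A.zero_mem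
  have hJadd : ∀ a ∈ J, ∀ b ∈ J, a + b ∈ J := fun a ha b hb h => by
    rw [add_mul]; exact A.add_mem (ha h) (hb h)
  have hJmul : ∀ a ∈ J, ∀ h : C(X, ℂ), a * h ∈ J := fun a ha h k => by
    rw [mul_assoc]; exact ha (h * k)
  have hJA : ∀ g ∈ J, g ∈ A := fun g hg => by
    have := hg 1; rwa [mul_one] at this
  -- f ∈ J
  have hfJ : f ∈ J := by
    intro h
    by_cases hFne : (Uᶜ : Set X).Nonempty
    · have hFc : IsClosed (Uᶜ : Set X) := hU.isClosed_compl
      obtain ⟨x₀, hx₀⟩ := hUne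
      have hFuniv : (Uᶜ : Set X) ≠ univ := fun hc => (hc ▸ (fun hx => hx hx₀ : x₀ ∈ Uᶜ → False)) (mem_univ x₀)
      have : f * h ∈ closure (A : Set C(X, ℂ)) := by
        rw [Metric.mem_closure_iff]
        intro ε hε
        have hδ : 0 < ε / (‖f‖ + 1) := by positivity
        obtain ⟨a, haA, hap⟩ := hApprox Uᶜ hFc hFne hFuniv h (ε / (‖f‖ + 1)) hδ
        refine ⟨f * a, A.mul_mem hfA haA, ?_⟩
        have hle : dist (f * h) (f * a) ≤ ‖f‖ * (ε / (‖f‖ + 1)) := by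
          rw [ContinuousMap.dist_le (by positivity)]
          intro x
          rw [ContinuousMap.mul_apply, ContinuousMap.mul_apply, dist_eq_norm,
            ← mul_sub, norm_mul]
          by_cases hxU : x ∈ U
          · rw [hfU x hxU]; simp; positivity
          · exact mul_le_mul (f.norm_coe_le_norm x) (hap x hxU).le (norm_nonneg _)
              (norm_nonneg _)
        calc dist (f * h) (f * a) ≤ ‖f‖ * (ε / (‖f‖ + 1)) := hle
          _ < ε := by
            rw [mul_div_assoc']
            rw [div_lt_iff₀ (by positivity)]
            nlinarith [norm_nonneg f]
      rwa [hAcl, SetLike.mem_coe] at this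
    · exfalso
      apply hf
      ext x
      have hxU : x ∈ U := by
        rw [not_nonempty_iff_eq_empty, compl_empty_iff] at hFne
        rw [hFne]; trivial
      simp [hfU x hxU]
  -- the common zero set of J
  set E : Set X := {x | ∀ g ∈ J, g x = 0} with hEdef
  have hEclosed : IsClosed E := by
    have : E = ⋂ g ∈ J, (fun x => g x) ⁻¹' {0} := by
      ext x; simp [hEdef]
    rw [this]
    exact isClosed_biInter fun g hg => (isClosed_singleton).preimage g.continuous
  obtain ⟨x₀, hx₀⟩ : ∃ x, f x ≠ 0 := by
    by_contra hc
    push_neg at hc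
    exact hf (ContinuousMap.ext fun x => by simp [hc x])
  have hEuniv : E ≠ univ := fun hc => hx₀ ((hc ▸ (mem_univ x₀) : x₀ ∈ E) f hfJ)
  have hpt : ∀ x ∉ E, ∃ g ∈ J, g x ≠ 0 := by
    intro x hx
    rw [hEdef, mem_setOf_eq] at hx
    push_neg at hx
    obtain ⟨g, hgJ, hgx⟩ := hx
    exact ⟨g, hgJ, hgx⟩
  -- show A = ⊤, contradiction
  apply hproper
  rw [eq_top_iff]
  intro h _
  by_cases hE : E.Nonempty
  · -- E nonempty: use pervasiveness on E
    have : h ∈ closure (A : Set C(X, ℂ)) := by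
      rw [Metric.mem_closure_iff]
      intro ε hε
      have hδ : 0 < ε / 2 := by positivity
      obtain ⟨a, haA, hap⟩ := hApprox E hEclosed hE hEuniv h (ε / 2) hδ
      set k : C(X, ℂ) := h - a with hkdef
      obtain ⟨k', hk'near, hk'zero⟩ := trunc_exists k (ε / 2) hδ
      set K : Set X := {x | ε / 2 ≤ ‖k x‖} with hKdef
      have hKclosed : IsClosed K := isClosed_le continuous_const (k.continuous.norm)
      have hKE : ∀ x ∈ K, x ∉ E := fun x hxK hxE => by
        have h1 : ‖k x‖ < ε / 2 := by
          rw [hkdef]; exact hap x hxE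
        exact absurd hxK (not_le.2 h1)
      obtain ⟨g, hgJ, hgK⟩ := exists_nonvanishing J hJ0 hJadd hJmul K
        hKclosed.isCompact (fun x hx => hpt x (hKE x hx))
      have hsupp : closure {x | k' x ≠ 0} ⊆ K := by
        apply closure_minimal _ hKclosed
        intro x hx
        by_contra hxK
        exact hx (hk'zero x (not_le.1 hxK).le)
      obtain ⟨h', hk'eq⟩ := glue_exists k' g K hKclosed hsupp hgK
      have hk'A : k' ∈ A := hk'eq ▸ hgJ h'
      refine ⟨a + k', A.add_mem haA hk'A, ?_⟩
      have : dist h (a + k') ≤ ε / 2 := by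
        rw [ContinuousMap.dist_le hδ.le]
        intro x
        have : h x - (a x + k' x) = k x - k' x := by rw [hkdef]; simp; ring
        rw [dist_eq_norm, ContinuousMap.add_apply, this]
        exact hk'near x
      linarith
    rwa [hAcl, SetLike.mem_coe] at this
  · -- E empty: get invertible element of J
    rw [not_nonempty_iff_eq_empty] at hE
    obtain ⟨g, hgJ, hgK⟩ := exists_nonvanishing J hJ0 hJadd hJmul univ
      isCompact_univ (fun x _ => hpt x (by rw [hE]; exact notMem_empty x))
    have hgne : ∀ x, g x ≠ 0 := fun x => hgK x (mem_univ x)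
    set ginv : C(X, ℂ) := ⟨fun x => (g x)⁻¹, g.continuous.inv₀ hgne⟩ with hginv
    have : g * (ginv * h) = h := by
      ext x
      simp only [ContinuousMap.mul_apply, hginv, ContinuousMap.coe_mk]
      rw [← mul_assoc, mul_inv_cancel₀ (hgne x), one_mul]
    exact this ▸ hgJ (ginv * h)
end

section
/- If a uniform algebra A on a compact Hausdorff space X is analytic (every element vanishing on a nonempty open set is identically zero) and X has no isolated points, then A is an integral domain. -/
variable {X : Type} [TopologicalSpace X] [CompactSpace X] [T2Space X]

/-- If a uniform algebra `A` on a compact Hausdorff space `X` with no isolated points is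
analytic, then `A` is an integral domain. -/
theorem stmt_1 (A : Subalgebra ℂ C(X, ℂ))
    (hclosed : IsClosed (A : Set C(X, ℂ)))
    (hsep : ∀ x y : X, x ≠ y → ∃ f ∈ A, f x ≠ f y)
    (hnoiso : ∀ x : X, ¬ IsOpen ({x} : Set X))
    (hanalytic : ∀ f ∈ A, ∀ U : Set X, IsOpen U → U.Nonempty →
      (∀ x ∈ U, f x = 0) → f = 0) :
    ∀ f g : C(X, ℂ), f ∈ A → g ∈ A → f * g = 0 → f = 0 ∨ g = 0 := by
  intro f g hf hg hfg
  by_cases hf0 : f = 0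
  · exact Or.inl hf0
  · right
    have hne : {x : X | f x ≠ 0}.Nonempty := by
      by_contra h
      rw [Set.not_nonempty_iff_eq_empty, Set.eq_empty_iff_forall_notMem] at h
      exact hf0 (ContinuousMap.ext fun x => by simpa using h x)
    refine hanalytic g hg {x : X | f x ≠ 0} (isOpen_compl_iff.mpr (isClosed_eq (map_continuous f) continuous_const)) hne ?_
    intro x hx
    have : f x * g x = 0 := by
      have := ContinuousMap.congr_fun hfg x
      simpa using this
    exact (mul_eq_zero.mp this).resolve_left hx
end

section
/- Let A be a uniform algebra on a connected compact Hausdorff space X. If A is an integral domain, then A is antisymmetric: every f ∈ A that is real-valued on X is constant. -/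
variable {X : Type} [TopologicalSpace X] [CompactSpace X] [T2Space X]

/-- Auxiliary: a closed subalgebra containing a real-valued `f` contains `φ ∘ re ∘ f`
for every continuous `φ : ℝ → ℝ`. -/
lemma comp_mem_aux (A : Subalgebra ℂ C(X, ℂ))
    (hclosed : IsClosed (A : Set C(X, ℂ)))
    (f : C(X, ℂ)) (hf : f ∈ A) (him : ∀ x : X, (f x).im = 0)
    (φ : ℝ → ℝ) (hφ : Continuous φ) :
    (⟨fun x => ((φ (f x).re : ℝ) : ℂ),
      Complex.continuous_ofReal.comp (hφ.comp (Complex.continuous_re.comp f.continuous))⟩ :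
      C(X, ℂ)) ∈ A := by
  set g : C(X, ℂ) := ⟨fun x => ((φ (f x).re : ℝ) : ℂ),
      Complex.continuous_ofReal.comp (hφ.comp (Complex.continuous_re.comp f.continuous))⟩
  have hfx : ∀ x : X, f x = ((f x).re : ℂ) := by
    intro x
    exact Complex.ext rfl (by simp [him x])
  have hA : closure (A : Set C(X, ℂ)) = A := hclosed.closure_eq
  rw [← SetLike.mem_coe, ← hA, Metric.mem_closure_iff]
  intro ε hε
  set M := ‖f‖ with hM
  obtain ⟨p, hp⟩ := exists_polynomial_near_of_continuousOn (-M) M φ hφ.continuousOn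
    (ε / 2) (by linarith)
  set q : Polynomial ℂ := p.map (algebraMap ℝ ℂ)
  refine ⟨Polynomial.aeval f q, ?_, ?_⟩
  · have h1 : Polynomial.aeval f q ∈ Algebra.adjoin ℂ {f} := by
      rw [Algebra.adjoin_singleton_eq_range_aeval]
      exact ⟨q, rfl⟩
    exact Algebra.adjoin_le (Set.singleton_subset_iff.2 hf) h1
  · have key : dist g (Polynomial.aeval f q) ≤ ε / 2 := by
      rw [ContinuousMap.dist_le (by linarith)]
      intro x
      set t := (f x).re
      have ht : t ∈ Set.Icc (-M) M := by
        have h1 : |t| ≤ ‖f x‖ := Complex.abs_re_le_norm (f x)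
        have h2 : ‖f x‖ ≤ ‖f‖ := f.norm_coe_le_norm x
        have : |t| ≤ M := le_trans h1 h2
        exact abs_le.mp this
      have hq : (Polynomial.aeval f q) x = ((p.eval t : ℝ) : ℂ) := by
        rw [Polynomial.aeval_continuousMap_apply, hfx x]
        have : ((t : ℂ)) = algebraMap ℝ ℂ t := rfl
        rw [show q.eval ((t : ℝ) : ℂ) = Polynomial.aeval ((t : ℝ) : ℂ) p by
          rw [Polynomial.aeval_def, ← Polynomial.eval_map]]
        rw [this, Polynomial.aeval_algebraMap_apply_eq_algebraMap_eval]
        simp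
      rw [hq]
      have : dist (g x) ((p.eval t : ℝ) : ℂ) = |φ t - p.eval t| := by
        rw [dist_eq_norm]
        show ‖((φ t : ℝ) : ℂ) - ((p.eval t : ℝ) : ℂ)‖ = _
        rw [← Complex.ofReal_sub, Complex.norm_real, Real.norm_eq_abs]
      rw [this, abs_sub_comm]
      exact le_of_lt (hp t ht)
    linarith
/-- If a uniform algebra on a connected compact Hausdorff space is an integral domain,
then it is antisymmetric: every real-valued element is constant. -/
theorem stmt_2 (A : Subalgebra ℂ C(X, ℂ)) [ConnectedSpace X]
    (hclosed : IsClosed (A : Set C(X, ℂ)))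
    (hsep : ∀ x y : X, x ≠ y → ∃ f ∈ A, f x ≠ f y)
    (hdomain : ∀ f g : C(X, ℂ), f ∈ A → g ∈ A → f * g = 0 → f = 0 ∨ g = 0) :
    ∀ f ∈ A, (∀ x : X, (f x).im = 0) → ∃ c : ℂ, ∀ x : X, f x = c := by
  intro f hf him
  by_contra hcon
  push_neg at hcon
  have hfx : ∀ x : X, f x = ((f x).re : ℂ) := fun x => Complex.ext rfl (by simp [him x])
  obtain ⟨x₀⟩ : Nonempty X := inferInstance
  obtain ⟨y, hy⟩ := hcon (f x₀)
  -- real values a ≠ b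
  set a := (f x₀).re
  set b := (f y).re
  have hab : a ≠ b := by
    intro h
    apply hy
    rw [hfx y, hfx x₀]
    exact congrArg Complex.ofReal h.symm
  -- wlog handled by symmetry: define c between
  set c := (a + b) / 2
  set φ : ℝ → ℝ := fun t => max (t - c) 0
  set ψ : ℝ → ℝ := fun t => max (c - t) 0
  have hφc : Continuous φ := (continuous_id.sub continuous_const).max continuous_const
  have hψc : Continuous ψ := (continuous_const.sub continuous_id).max continuous_const
  have hg := comp_mem_aux A hclosed f hf him φ hφc
  have hh := comp_mem_aux A hclosed f hf him ψ hψc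
  set g : C(X, ℂ) := ⟨fun x => ((φ (f x).re : ℝ) : ℂ), _⟩
  set h : C(X, ℂ) := ⟨fun x => ((ψ (f x).re : ℝ) : ℂ), _⟩
  have hmul : g * h = 0 := by
    ext x
    show ((φ (f x).re : ℝ) : ℂ) * ((ψ (f x).re : ℝ) : ℂ) = 0
    rw [← Complex.ofReal_mul, Complex.ofReal_eq_zero]
    rcases le_total (f x).re c with hle | hle
    · have : φ (f x).re = 0 := max_eq_right (by simp [φ]; linarith)
      rw [this, zero_mul]
    · have : ψ (f x).re = 0 := max_eq_right (by simp [ψ]; linarith)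
      rw [this, mul_zero]
  have hval : ∀ t : ℝ, c < t → g ≠ 0 ∨ True := fun _ _ => Or.inr trivial
  rcases hdomain g h hg hh hmul with h0 | h0
  · -- g = 0, but g is nonzero at the point whose value exceeds c
    rcases lt_or_gt_of_ne hab with hlt | hlt
    · -- a < b, so b > c : g y ≠ 0
      have hbc : c < b := by simp only [c]; linarith
      have := congrArg (fun u : C(X, ℂ) => u y) h0
      simp only [ContinuousMap.zero_apply] at this
      have hgy : (g y : ℂ) = ((φ b : ℝ) : ℂ) := rfl
      rw [hgy, Complex.ofReal_eq_zero] at this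
      have : φ b = 0 := this
      have hpos : 0 < φ b := lt_max_of_lt_left (by linarith)
      linarith
    · -- b < a, so a > c : g x₀ ≠ 0
      have hac : c < a := by simp only [c]; linarith
      have := congrArg (fun u : C(X, ℂ) => u x₀) h0
      simp only [ContinuousMap.zero_apply] at this
      have hgy : (g x₀ : ℂ) = ((φ a : ℝ) : ℂ) := rfl
      rw [hgy, Complex.ofReal_eq_zero] at this
      have hpos : 0 < φ a := lt_max_of_lt_left (by linarith)
      linarith
  · -- h = 0, but h is nonzero at the point whose value is below c
    rcases lt_or_gt_of_ne hab with hlt | hlt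
    · have hac : a < c := by simp only [c]; linarith
      have := congrArg (fun u : C(X, ℂ) => u x₀) h0
      simp only [ContinuousMap.zero_apply] at this
      have hhy : (h x₀ : ℂ) = ((ψ a : ℝ) : ℂ) := rfl
      rw [hhy, Complex.ofReal_eq_zero] at this
      have hpos : 0 < ψ a := lt_max_of_lt_left (by linarith)
      linarith
    · have hbc : b < c := by simp only [c]; linarith
      have := congrArg (fun u : C(X, ℂ) => u y) h0
      simp only [ContinuousMap.zero_apply] at this
      have hhy : (h y : ℂ) = ((ψ b : ℝ) : ℂ) := rfl
      rw [hhy, Complex.ofReal_eq_zero] at this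
      have hpos : 0 < ψ b := lt_max_of_lt_left (by linarith)
      linarith
end

section
/- Let A be a pervasive uniform algebra on a compact Hausdorff space X, and let f ∈ A be nonconstant. Then the closed subalgebra of C(X) generated by A together with the complex conjugate of f equals C(X). -/
variable {X : Type} [TopologicalSpace X] [CompactSpace X] [T2Space X]

/-- In a closed subalgebra `B` containing (the complexification of) a real-valued
function `u`, every continuous real function of `u` again belongs to `B`. -/
lemma comp_mem_of_closed (B : Subalgebra ℂ C(X, ℂ)) (hB : IsClosed (B : Set C(X, ℂ)))
    (u : C(X, ℝ))
    (huB : (⟨fun z => ((u z : ℝ) : ℂ), Complex.continuous_ofReal.comp u.continuous⟩ : C(X, ℂ)) ∈ B)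
    (φ : ℝ → ℝ) (hφ : Continuous φ) :
    (⟨fun z => ((φ (u z) : ℝ) : ℂ),
      Complex.continuous_ofReal.comp (hφ.comp u.continuous)⟩ : C(X, ℂ)) ∈ B := by
  set uC : C(X, ℂ) := ⟨fun z => ((u z : ℝ) : ℂ), Complex.continuous_ofReal.comp u.continuous⟩
    with huC
  set g : C(X, ℂ) := ⟨fun z => ((φ (u z) : ℝ) : ℂ),
    Complex.continuous_ofReal.comp (hφ.comp u.continuous)⟩ with hg
  have hadj : Algebra.adjoin ℂ ({uC} : Set C(X, ℂ)) ≤ B :=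
    Algebra.adjoin_le (Set.singleton_subset_iff.mpr huB)
  have hcl : g ∈ closure (B : Set C(X, ℂ)) := by
    rw [Metric.mem_closure_iff]
    intro ε hε
    obtain ⟨p, hp⟩ := exists_polynomial_near_of_continuousOn (-‖u‖) ‖u‖ φ hφ.continuousOn
      (ε / 2) (by positivity)
    refine ⟨Polynomial.aeval uC (p.map (algebraMap ℝ ℂ)), hadj
      (Polynomial.aeval_mem_adjoin_singleton ℂ uC), ?_⟩
    have hle : dist g (Polynomial.aeval uC (p.map (algebraMap ℝ ℂ))) ≤ ε / 2 := by
      rw [ContinuousMap.dist_le (by positivity)]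
      intro z
      have h1 : (Polynomial.aeval uC (p.map (algebraMap ℝ ℂ))) z
          = ((p.eval (u z) : ℝ) : ℂ) := by
        calc (Polynomial.aeval uC (p.map (algebraMap ℝ ℂ))) z
            = Polynomial.aeval (uC z) (p.map (algebraMap ℝ ℂ)) := by
              rw [Polynomial.aeval_continuousMap_apply]; rfl
          _ = Polynomial.aeval (uC z) p := by rw [Polynomial.aeval_map_algebraMap]
          _ = ((p.eval (u z) : ℝ) : ℂ) := by
              rw [show uC z = algebraMap ℝ ℂ (u z) from rfl,
                Polynomial.aeval_algebraMap_apply_eq_algebraMap_eval]; rfl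
      have h2 : g z = ((φ (u z) : ℝ) : ℂ) := rfl
      rw [h1, h2, Complex.dist_eq, ← Complex.ofReal_sub, Complex.norm_real, Real.norm_eq_abs]
      have hmem : u z ∈ Set.Icc (-‖u‖) ‖u‖ := by
        have := u.norm_coe_le_norm z
        rw [Real.norm_eq_abs] at this
        exact abs_le.mp this
      have := hp (u z) hmem
      rw [abs_sub_comm] at this
      exact this.le
    linarith [hε, hle.trans_lt (by linarith : ε / 2 < ε)]
  rwa [hB.closure_eq] at hcl

/-- Key step: a closed subalgebra `B ⊇ A` (with `A` pervasive) containing a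
nonconstant real-valued function is everything. -/
lemma key_lemma (A B : Subalgebra ℂ C(X, ℂ)) (hAB : A ≤ B)
    (hB : IsClosed (B : Set C(X, ℂ))) (hperv : Pervasive A) (u : C(X, ℝ))
    (huB : (⟨fun z => ((u z : ℝ) : ℂ), Complex.continuous_ofReal.comp u.continuous⟩ : C(X, ℂ)) ∈ B)
    {x y : X} (hxy : u x < u y) : B = ⊤ := by
  set a := u x with ha
  set b := u y with hb
  set c₁ : ℝ := (2 * a + b) / 3 with hc₁
  set c₂ : ℝ := (a + 2 * b) / 3 with hc₂
  have hac₁ : a < c₁ := by rw [hc₁]; linarith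
  have hc₁c₂ : c₁ < c₂ := by rw [hc₁, hc₂]; linarith
  have hc₂b : c₂ < b := by rw [hc₂]; linarith
  set χ : ℝ → ℝ := fun t => max 0 (min 1 ((c₂ - t) / (c₂ - c₁))) with hχ
  have hχcont : Continuous χ := by
    apply continuous_const.max
    apply continuous_const.min
    exact (continuous_const.sub continuous_id).div_const _
  have hχ0 : ∀ t, 0 ≤ χ t := fun t => le_max_left _ _
  have hχ1 : ∀ t, χ t ≤ 1 := fun t => max_le zero_le_one (min_le_left _ _)
  have hχeq0 : ∀ t, c₂ ≤ t → χ t = 0 := by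
    intro t ht
    have h1 : (c₂ - t) / (c₂ - c₁) ≤ 0 :=
      div_nonpos_iff.mpr (Or.inr ⟨by linarith, by linarith⟩)
    simp only [hχ]
    exact max_eq_left (le_trans (min_le_right _ _) h1)
  have hχeq1 : ∀ t, t ≤ c₁ → χ t = 1 := by
    intro t ht
    have h1 : (1 : ℝ) ≤ (c₂ - t) / (c₂ - c₁) := by
      rw [le_div_iff₀ (by linarith)]
      linarith
    simp only [hχ]
    rw [min_eq_left h1, max_eq_right zero_le_one]
  -- the two proper closed sets
  set F : Set X := u ⁻¹' Set.Iic c₂ with hF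
  set G : Set X := u ⁻¹' Set.Ici c₁ with hG
  have hFclosed : IsClosed F := IsClosed.preimage u.continuous isClosed_Iic
  have hGclosed : IsClosed G := IsClosed.preimage u.continuous isClosed_Ici
  have hFne : F.Nonempty := ⟨x, by simp [hF, Set.mem_preimage]; linarith⟩
  have hGne : G.Nonempty := ⟨y, by simp [hG, Set.mem_preimage]; linarith⟩
  have hFproper : F ≠ Set.univ := by
    intro h
    have : y ∈ F := h ▸ Set.mem_univ y
    simp only [hF, Set.mem_preimage, Set.mem_Iic] at this
    linarith
  have hGproper : G ≠ Set.univ := by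
    intro h
    have : x ∈ G := h ▸ Set.mem_univ x
    simp only [hG, Set.mem_preimage, Set.mem_Ici] at this
    linarith
  -- χ ∘ u is in B
  have hχu : (⟨fun z => ((χ (u z) : ℝ) : ℂ),
      Complex.continuous_ofReal.comp (hχcont.comp u.continuous)⟩ : C(X, ℂ)) ∈ B :=
    comp_mem_of_closed B hB u huB χ hχcont
  set χu : C(X, ℂ) := ⟨fun z => ((χ (u z) : ℝ) : ℂ),
    Complex.continuous_ofReal.comp (hχcont.comp u.continuous)⟩ with hχu_def
  -- density of B
  haveI : CompactSpace F := isCompact_iff_compactSpace.mp (hFclosed.isCompact)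
  haveI : CompactSpace G := isCompact_iff_compactSpace.mp (hGclosed.isCompact)
  have hdense : ∀ h : C(X, ℂ), h ∈ closure (B : Set C(X, ℂ)) := by
    intro h
    rw [Metric.mem_closure_iff]
    intro ε hε
    -- approximate on F and on G
    have hDF := (hperv F hFclosed hFne hFproper) (h.restrict F)
    have hDG := (hperv G hGclosed hGne hGproper) (h.restrict G)
    rw [Metric.mem_closure_iff] at hDF hDG
    obtain ⟨q₁, hq₁mem, hq₁⟩ := hDF (ε / 2) (by positivity)
    obtain ⟨q₂, hq₂mem, hq₂⟩ := hDG (ε / 2) (by positivity)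
    obtain ⟨g₁, hg₁A, rfl⟩ := hq₁mem
    obtain ⟨g₂, hg₂A, rfl⟩ := hq₂mem
    have hFbound : ∀ z ∈ F, ‖h z - g₁ z‖ ≤ ε / 2 := by
      intro z hz
      have := ContinuousMap.dist_apply_le_dist (f := h.restrict F) (g := g₁.restrict F) ⟨z, hz⟩
      simp only [ContinuousMap.restrict_apply] at this
      rw [← dist_eq_norm]
      exact this.trans hq₁.le
    have hGbound : ∀ z ∈ G, ‖h z - g₂ z‖ ≤ ε / 2 := by
      intro z hz
      have := ContinuousMap.dist_apply_le_dist (f := h.restrict G) (g := g₂.restrict G) ⟨z, hz⟩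
      simp only [ContinuousMap.restrict_apply] at this
      rw [← dist_eq_norm]
      exact this.trans hq₂.le
    refine ⟨χu * g₁ + (1 - χu) * g₂, ?_, ?_⟩
    · exact B.add_mem (B.mul_mem hχu (hAB hg₁A))
        (B.mul_mem (B.sub_mem B.one_mem hχu) (hAB hg₂A))
    · have hdl : dist h (χu * g₁ + (1 - χu) * g₂) ≤ ε / 2 := by
        rw [ContinuousMap.dist_le (by positivity)]
        intro z
        set c : ℝ := χ (u z) with hc
        have hzval : (χu * g₁ + (1 - χu) * g₂) z = (c : ℂ) * g₁ z + (1 - (c : ℂ)) * g₂ z := rfl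
        rw [dist_eq_norm, hzval]
        have hsplit : h z - ((c : ℂ) * g₁ z + (1 - (c : ℂ)) * g₂ z)
            = (c : ℂ) * (h z - g₁ z) + (1 - (c : ℂ)) * (h z - g₂ z) := by ring
        rw [hsplit]
        have hterm1 : ‖(c : ℂ) * (h z - g₁ z)‖ ≤ c * (ε / 2) := by
          rcases eq_or_lt_of_le (hχ0 (u z)) with hc0 | hc0
          · rw [← hc] at hc0; rw [← hc0]; simp
          · have hzF : z ∈ F := by
              simp only [hF, Set.mem_preimage, Set.mem_Iic]
              by_contra hcon
              push_neg at hcon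
              have := hχeq0 (u z) hcon.le
              rw [← hc] at this; linarith
            rw [norm_mul, Complex.norm_real, Real.norm_eq_abs, abs_of_nonneg (hχ0 _)]
            exact mul_le_mul_of_nonneg_left (hFbound z hzF) (hχ0 _)
        have hterm2 : ‖(1 - (c : ℂ)) * (h z - g₂ z)‖ ≤ (1 - c) * (ε / 2) := by
          rcases eq_or_lt_of_le (hχ1 (u z)) with hc1 | hc1
          · rw [← hc] at hc1; rw [hc1]; simp
          · have hzG : z ∈ G := by
              simp only [hG, Set.mem_preimage, Set.mem_Ici]
              by_contra hcon
              push_neg at hcon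
              have := hχeq1 (u z) hcon.le
              rw [← hc] at this; linarith
            have h1c : (1 : ℂ) - (c : ℂ) = ((1 - c : ℝ) : ℂ) := by push_cast; ring
            rw [h1c, norm_mul, Complex.norm_real, Real.norm_eq_abs,
              abs_of_nonneg (by linarith : (0:ℝ) ≤ 1 - c)]
            exact mul_le_mul_of_nonneg_left (hGbound z hzG) (by linarith)
        calc ‖(c : ℂ) * (h z - g₁ z) + (1 - (c : ℂ)) * (h z - g₂ z)‖
            ≤ ‖(c : ℂ) * (h z - g₁ z)‖ + ‖(1 - (c : ℂ)) * (h z - g₂ z)‖ := norm_add_le _ _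
          _ ≤ c * (ε / 2) + (1 - c) * (ε / 2) := add_le_add hterm1 hterm2
          _ = ε / 2 := by ring
      exact hdl.trans_lt (by linarith)
  -- closed + dense ⇒ top
  have : ∀ h : C(X, ℂ), h ∈ B := by
    intro h
    have := hdense h
    rwa [hB.closure_eq] at this
  exact Algebra.eq_top_iff.mpr this

/-- If `A` is pervasive and `f ∈ A` is nonconstant, then the closed subalgebra generated
by `A` and the complex conjugate of `f` is all of `C(X, ℂ)`. -/
theorem stmt_4 (A : Subalgebra ℂ C(X, ℂ))
    (hclosed : IsClosed (A : Set C(X, ℂ)))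
    (hsep : ∀ x y : X, x ≠ y → ∃ g ∈ A, g x ≠ g y)
    (hperv : Pervasive A)
    (f : C(X, ℂ)) (hf : f ∈ A) (hfnc : ∃ x y : X, f x ≠ f y) :
    (Algebra.adjoin ℂ (insert (star f) (A : Set C(X, ℂ)))).topologicalClosure = ⊤ := by
  obtain ⟨x, y, hxy⟩ := hfnc
  set B := (Algebra.adjoin ℂ (insert (star f) (A : Set C(X, ℂ)))).topologicalClosure with hBdef
  have hB : IsClosed (B : Set C(X, ℂ)) := Subalgebra.isClosed_topologicalClosure _
  have hle : Algebra.adjoin ℂ (insert (star f) (A : Set C(X, ℂ))) ≤ B :=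
    Subalgebra.le_topologicalClosure _
  have hAB : A ≤ B := fun g hg => hle (Algebra.subset_adjoin (Set.mem_insert_of_mem _ hg))
  have hfB : f ∈ B := hAB hf
  have hsfB : star f ∈ B := hle (Algebra.subset_adjoin (Set.mem_insert _ _))
  -- real and imaginary parts
  set u : C(X, ℝ) := ⟨fun z => (f z).re, Complex.continuous_re.comp f.continuous⟩ with hu
  set v : C(X, ℝ) := ⟨fun z => (f z).im, Complex.continuous_im.comp f.continuous⟩ with hv
  have huB : (⟨fun z => ((u z : ℝ) : ℂ),
      Complex.continuous_ofReal.comp u.continuous⟩ : C(X, ℂ)) ∈ B := by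
    have heq : (⟨fun z => ((u z : ℝ) : ℂ), Complex.continuous_ofReal.comp u.continuous⟩ : C(X, ℂ))
        = (2⁻¹ : ℂ) • (f + star f) := by
      ext z
      simp only [hu, ContinuousMap.coe_mk, ContinuousMap.smul_apply, ContinuousMap.add_apply,
        ContinuousMap.star_apply, smul_eq_mul]
      rw [show star (f z) = (starRingEnd ℂ) (f z) from rfl, Complex.add_conj]
      push_cast
      ring
    rw [heq]
    exact B.smul_mem (B.add_mem hfB hsfB) _
  have hvB : (⟨fun z => ((v z : ℝ) : ℂ),
      Complex.continuous_ofReal.comp v.continuous⟩ : C(X, ℂ)) ∈ B := by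
    have heq : (⟨fun z => ((v z : ℝ) : ℂ), Complex.continuous_ofReal.comp v.continuous⟩ : C(X, ℂ))
        = (-(2⁻¹) * Complex.I : ℂ) • (f - star f) := by
      ext z
      simp only [hv, ContinuousMap.coe_mk, ContinuousMap.smul_apply, ContinuousMap.sub_apply,
        ContinuousMap.star_apply, smul_eq_mul]
      rw [show star (f z) = (starRingEnd ℂ) (f z) from rfl, Complex.sub_conj]
      have hI : Complex.I * Complex.I = -1 := Complex.I_mul_I
      push_cast
      ring_nf
      rw [Complex.I_sq]
      ring
    rw [heq]
    exact B.smul_mem (B.sub_mem hfB hsfB) _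
  -- one of u, v is nonconstant
  have hcases : u x ≠ u y ∨ v x ≠ v y := by
    by_contra hcon
    push_neg at hcon
    exact hxy (Complex.ext hcon.1 hcon.2)
  rcases hcases with hne | hne
  · rcases hne.lt_or_gt with hlt | hlt
    · exact key_lemma A B hAB hB hperv u huB hlt
    · exact key_lemma A B hAB hB hperv u huB hlt
  · rcases hne.lt_or_gt with hlt | hlt
    · exact key_lemma A B hAB hB hperv v hvB hlt
    · exact key_lemma A B hAB hB hperv v hvB hlt
end

section
/- Let A be a uniform algebra on a compact Hausdorff space X, let φ : A → ℂ be a character (nonzero algebra homomorphism), and let λ be a regular Borel probability measure on X representing φ (i.e., φ(f) = ∫ f dλ for all f ∈ A). Suppose the support E of λ contains a point b with the property that there exists f ∈ A with φ(f) = 0 and f(b) = 1. Then the restriction algebra A|E is not dense in C(E). -/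
open MeasureTheory

variable {X : Type} [TopologicalSpace X] [CompactSpace X] [T2Space X]
  [MeasurableSpace X] [BorelSpace X]

/-- The closed support of a measure: points all of whose open neighbourhoods have
positive measure. -/
def msupp (μ : Measure X) : Set X :=
  {x : X | ∀ U : Set X, IsOpen U → x ∈ U → μ U ≠ 0}

theorem msupp_compl_isOpen (μ : Measure X) : IsOpen (msupp μ)ᶜ := by
  rw [isOpen_iff_forall_mem_open]
  intro x hx
  simp only [msupp, Set.mem_compl_iff, Set.mem_setOf_eq, not_forall] at hx
  obtain ⟨U, hU, hxU, hUnull⟩ := hx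
  push_neg at hUnull
  refine ⟨U, fun y hy => ?_, hU, hxU⟩
  simp only [msupp, Set.mem_compl_iff, Set.mem_setOf_eq, not_forall]
  exact ⟨U, hU, hy, by simpa using hUnull⟩

theorem msupp_compl_null (μ : Measure X) [IsFiniteMeasure μ] (hreg : μ.Regular) :
    μ (msupp μ)ᶜ = 0 := by
  have hK : ∀ K : Set X, IsCompact K → K ⊆ (msupp μ)ᶜ → μ K = 0 := by
    intro K hKc hKsub
    -- for each x in K choose a null open neighborhood
    have h : ∀ x : X, x ∈ K → ∃ U : Set X, IsOpen U ∧ x ∈ U ∧ μ U = 0 := by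
      intro x hx
      have := hKsub hx
      simp only [msupp, Set.mem_compl_iff, Set.mem_setOf_eq, not_forall] at this
      obtain ⟨U, hU, hxU, hUnull⟩ := this
      push_neg at hUnull
      exact ⟨U, hU, hxU, by simpa using hUnull⟩
    choose! U hUo hxU hUn using h
    have hcover : K ⊆ ⋃ x ∈ K, U x := fun x hx => Set.mem_biUnion hx (hxU x hx)
    obtain ⟨t, ht⟩ := hKc.elim_finite_subcover_image (fun x hx => hUo x hx) hcover
    obtain ⟨htK, htfin, htcov⟩ := ht
    refine le_antisymm ?_ zero_le
    calc μ K ≤ μ (⋃ x ∈ t, U x) := measure_mono htcov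
    _ ≤ ∑' x : t, μ (U x) := measure_biUnion_le μ htfin.countable _
    _ = 0 := by
        simp only [ENNReal.tsum_eq_zero]
        exact fun ⟨x, hx⟩ => hUn x (htK hx)
  have := hreg.innerRegular.measure_eq_iSup (msupp_compl_isOpen μ)
  rw [this]
  simp only [ENNReal.iSup_eq_zero]
  intro K
  by_cases h1 : K ⊆ (msupp μ)ᶜ
  · by_cases h2 : IsCompact K
    · simp [h1, h2, hK K h2 h1]
    · simp [h2]
  · simp [h1]

open ComplexConjugate in
/-- If `λ` is a representing measure for a character `φ` of `A`, and the support `E` of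
`λ` contains a point `b` for which some `f ∈ A` has `φ f = 0` and `f b = 1`, then the
restriction algebra `A|E` is not dense in `C(E)`. -/
theorem stmt_5 (A : Subalgebra ℂ C(X, ℂ))
    (hclosed : IsClosed (A : Set C(X, ℂ)))
    (hsep : ∀ x y : X, x ≠ y → ∃ f ∈ A, f x ≠ f y)
    (φ : A →ₐ[ℂ] ℂ)
    (lam : Measure X) [IsProbabilityMeasure lam] (hreg : lam.Regular)
    (hrep : ∀ f : A, φ f = ∫ x, (f : C(X, ℂ)) x ∂lam)
    (b : X) (hb : b ∈ msupp lam)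
    (f : A) (hφf : φ f = 0) (hfb : (f : C(X, ℂ)) b = 1) :
    ¬ Dense ((fun g : C(X, ℂ) => g.restrict (msupp lam)) '' (A : Set C(X, ℂ))) := by
  intro hdense
  set E := msupp lam with hE
  set F : C(X, ℂ) := (f : C(X, ℂ)) with hF
  have hEclosed : IsClosed E := isOpen_compl_iff.mp (msupp_compl_isOpen lam)
  haveI : CompactSpace E := isCompact_iff_compactSpace.mp hEclosed.isCompact
  have hnull : lam Eᶜ = 0 := msupp_compl_null lam hreg
  have hae : ∀ᵐ x ∂lam, x ∈ E := by
    rw [MeasureTheory.ae_iff]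
    exact hnull
  have hint : ∀ g : C(X, ℂ), MeasureTheory.Integrable (fun x => g x) lam := fun g =>
    g.continuous.integrable_of_hasCompactSupport (HasCompactSupport.of_compactSpace _)
  -- the annihilation property
  have hzero : ∀ g ∈ A, ∫ x, g x * F x ∂lam = 0 := by
    intro g hg
    have h1 : φ (⟨g, hg⟩ * f) = 0 := by
      rw [map_mul, hφf, mul_zero]
    have h2 := hrep (⟨g, hg⟩ * f)
    rw [h1] at h2
    have : ∀ x, ((((⟨g, hg⟩ : A) * f : A) : C(X, ℂ))) x = g x * F x := fun x => rfl
    simp only [this] at h2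
    exact h2.symm
  -- the key integral is zero
  have hkey : ∫ x, Complex.normSq (F x) ∂lam = 0 := by
    have hC : ∫ x, conj (F x) * F x ∂lam = 0 := by
      have hbound : ∀ ε : ℝ, 0 < ε → ‖∫ x, conj (F x) * F x ∂lam‖ ≤ ε * ‖F‖ := by
        intro ε hε
        obtain ⟨h, hball, hmem⟩ := Metric.dense_iff.mp hdense ((star F).restrict E) ε hε
        obtain ⟨g, hgA, hgr⟩ := hmem
        subst hgr
        have hdist : dist (g.restrict E) ((star F).restrict E) < ε := by
          simpa [Metric.mem_ball] using hball
        have hcF : Integrable (fun x => conj (F x) * F x) lam :=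
          (star F * F : C(X, ℂ)).continuous.integrable_of_hasCompactSupport
            (HasCompactSupport.of_compactSpace _)
        have hgF : Integrable (fun x => g x * F x) lam :=
          (g * F).continuous.integrable_of_hasCompactSupport
            (HasCompactSupport.of_compactSpace _)
        calc ‖∫ x, conj (F x) * F x ∂lam‖
            = ‖∫ x, (conj (F x) - g x) * F x ∂lam‖ := by
              rw [show (∫ x, (conj (F x) - g x) * F x ∂lam)
                  = (∫ x, conj (F x) * F x ∂lam) - ∫ x, g x * F x ∂lam by
                rw [← integral_sub hcF hgF]; congr 1; ext x; ring]
              rw [hzero g hgA, sub_zero]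
          _ ≤ ε * ‖F‖ := by
              have : ∀ᵐ x ∂lam, ‖(conj (F x) - g x) * F x‖ ≤ ε * ‖F‖ := by
                filter_upwards [hae] with x hx
                rw [norm_mul]
                gcongr
                · have h1 : ‖(star F).restrict E ⟨x, hx⟩ - g.restrict E ⟨x, hx⟩‖
                      ≤ dist ((star F).restrict E) (g.restrict E) := by
                    rw [← dist_eq_norm]
                    exact ContinuousMap.dist_apply_le_dist _
                  simp only [ContinuousMap.restrict_apply, ContinuousMap.star_apply] at h1
                  rw [dist_comm] at hdist
                  calc ‖conj (F x) - g x‖ ≤ _ := h1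
                    _ ≤ ε := hdist.le
                · exact F.norm_coe_le_norm x
              calc ‖∫ x, (conj (F x) - g x) * F x ∂lam‖
                  ≤ ε * ‖F‖ * (lam Set.univ).toReal := by
                    apply norm_integral_le_of_norm_le_const
                    exact this
                _ = ε * ‖F‖ := by simp
      by_contra hne
      have hpos : 0 < ‖∫ x, conj (F x) * F x ∂lam‖ := norm_pos_iff.mpr hne
      rcases le_or_gt ‖F‖ 0 with hF0 | hF0
      · have := hbound 1 one_pos
        nlinarith
      · have := hbound (‖∫ x, conj (F x) * F x ∂lam‖ / (2 * ‖F‖))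
          (by positivity)
        have heq : ‖F‖ * ‖∫ x, conj (F x) * F x ∂lam‖ / (2 * ‖F‖)
            = ‖∫ x, conj (F x) * F x ∂lam‖ / 2 := by
          field_simp
        rw [div_mul_eq_mul_div, mul_comm, heq] at this
        linarith
    have : ∫ x, (Complex.normSq (F x) : ℂ) ∂lam = 0 := by
      rw [← hC]; congr 1; ext x
      rw [← Complex.normSq_eq_conj_mul_self]
    have hint2 : Integrable (fun x => (Complex.normSq (F x) : ℂ)) lam :=
      (Complex.continuous_ofReal.comp
        (Complex.continuous_normSq.comp F.continuous)).integrable_of_hasCompactSupport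
        (HasCompactSupport.of_compactSpace _)
    have h2 := integral_re (𝕜 := ℂ) (μ := lam) hint2
    simp only [RCLike.re_to_complex, Complex.ofReal_re] at h2
    rw [h2, this, Complex.zero_re]
  -- lower bound: normSq F > 1/2 near b
  have hU : IsOpen {x : X | 1/2 < Complex.normSq (F x)} :=
    isOpen_lt continuous_const (Complex.continuous_normSq.comp F.continuous)
  have hbU : b ∈ {x : X | 1/2 < Complex.normSq (F x)} := by
    rw [Set.mem_setOf_eq, hfb]; norm_num
  have hUpos : lam {x : X | 1/2 < Complex.normSq (F x)} ≠ 0 := hb _ hU hbU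
  set U := {x : X | 1/2 < Complex.normSq (F x)}
  have hintns : Integrable (fun x => Complex.normSq (F x)) lam :=
    (Complex.continuous_normSq.comp F.continuous).integrable_of_hasCompactSupport
      (HasCompactSupport.of_compactSpace _)
  have h1 : (1/2 : ℝ) * (lam U).toReal ≤ ∫ x in U, Complex.normSq (F x) ∂lam := by
    apply setIntegral_ge_of_const_le_real hU.measurableSet (measure_ne_top _ _)
    · exact fun x hx => hx.le
    · exact hintns.integrableOn
  have h2 : ∫ x in U, Complex.normSq (F x) ∂lam ≤ ∫ x, Complex.normSq (F x) ∂lam :=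
    setIntegral_le_integral hintns (Filter.Eventually.of_forall fun x => Complex.normSq_nonneg _)
  have h3 : 0 < (lam U).toReal :=
    ENNReal.toReal_pos hUpos (measure_ne_top _ _)
  rw [hkey] at h2
  nlinarith
end

section
/- Let A be a proper pervasive uniform algebra on a compact Hausdorff space X. Then X is a perfect set: X has no isolated points. -/
variable {X : Type} [TopologicalSpace X] [CompactSpace X] [T2Space X]

/-- If `A` is a proper pervasive uniform algebra on `X`, then `X` has no isolated
points. -/
theorem stmt_7 (A : Subalgebra ℂ C(X, ℂ))
    (hclosed : IsClosed (A : Set C(X, ℂ)))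
    (hsep : ∀ x y : X, x ≠ y → ∃ f ∈ A, f x ≠ f y)
    (hperv : Pervasive A) (hproper : A ≠ ⊤) :
    ∀ x : X, ¬ IsOpen ({x} : Set X) := by
  classical
  intro x hx
  by_cases hy : ∃ y : X, y ≠ x
  swap
  · -- X = {x}: every continuous function is constant, so A = ⊤
    push_neg at hy
    apply hproper
    rw [eq_top_iff]
    intro f _
    have hf : f = algebraMap ℂ C(X, ℂ) (f x) := by
      ext z; rw [hy z]; rfl
    rw [hf]; exact A.algebraMap_mem _
  obtain ⟨y, hyx⟩ := hy
  set F : Set X := {x}ᶜ with hFdef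
  have hFclosed : IsClosed F := hx.isClosed_compl
  have hFne : F.Nonempty := ⟨y, hyx⟩
  have hFuniv : F ≠ Set.univ := fun h => by
    have : x ∈ F := h ▸ Set.mem_univ x
    exact this rfl
  haveI : CompactSpace ↥F := isCompact_iff_compactSpace.mp hFclosed.isCompact
  have D := hperv F hFclosed hFne hFuniv
  have hmemF : ∀ z : X, z ≠ x → z ∈ F := fun z hz => hz
  -- restriction norm bound pointwise
  have hres : ∀ (f : C(X, ℂ)) (z : X), z ≠ x → ‖f z‖ ≤ ‖f.restrict F‖ :=
    fun f z hz => (f.restrict F).norm_coe_le_norm ⟨z, hz⟩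
  by_cases hP : ∃ f ∈ A, f x = 1 ∧ ‖f.restrict F‖ < 1
  · -- Case 1: build the characteristic function of {x} inside A, conclude A = ⊤
    obtain ⟨f, hfA, hfx, hfr⟩ := hP
    have hc : IsLocallyConstant (fun z : X => if z = x then (1:ℂ) else 0) := by
      rw [IsLocallyConstant.iff_exists_open]
      intro z
      by_cases hz : z = x
      · exact ⟨{x}, hx, by simp [hz], fun w hw => by simp_all⟩
      · exact ⟨{x}ᶜ, isOpen_compl_singleton, hz, fun w hw => by simp_all⟩
    set χ : C(X, ℂ) := ⟨_, hc.continuous⟩ with hχdef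
    have hχx : χ x = 1 := by simp [χ]
    have hχz : ∀ z, z ≠ x → χ z = 0 := fun z hz => by simp [χ, hz]
    have hr0 : (0:ℝ) ≤ ‖f.restrict F‖ := norm_nonneg _
    -- f ^ n → χ
    have hbound : ∀ n : ℕ, ‖f ^ n - χ‖ ≤ ‖f.restrict F‖ ^ n := by
      intro n
      apply (ContinuousMap.norm_le _ (pow_nonneg hr0 n)).mpr
      intro z
      by_cases hz : z = x
      · subst hz
        simp only [ContinuousMap.sub_apply, ContinuousMap.pow_apply, hfx, hχx, one_pow,
          sub_self, norm_zero]
        exact pow_nonneg hr0 n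
      · rw [ContinuousMap.sub_apply, hχz z hz, sub_zero, ContinuousMap.pow_apply, norm_pow]
        exact pow_le_pow_left₀ (norm_nonneg _) (hres f z hz) n
    have htend : Filter.Tendsto (fun n : ℕ => f ^ n) Filter.atTop (nhds χ) := by
      rw [tendsto_iff_norm_sub_tendsto_zero]
      have h1 : Filter.Tendsto (fun n : ℕ => ‖f.restrict F‖ ^ n) Filter.atTop (nhds 0) :=
        tendsto_pow_atTop_nhds_zero_of_lt_one hr0 hfr
      exact squeeze_zero (fun n => norm_nonneg _) hbound h1
    have hχA : χ ∈ A := hclosed.mem_of_tendsto htend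
      (Filter.Eventually.of_forall fun n => pow_mem hfA n)
    -- now A = ⊤
    apply hproper
    rw [eq_top_iff]
    intro g _
    have : g ∈ closure (A : Set C(X, ℂ)) := by
      rw [Metric.mem_closure_iff]
      intro ε hε
      obtain ⟨s, hs, hd⟩ := D.exists_dist_lt (g.restrict F) hε
      obtain ⟨h, hhA, rfl⟩ := hs
      refine ⟨h + (g x - h x) • χ, A.add_mem hhA (A.smul_mem hχA _), ?_⟩
      have hle : dist g (h + (g x - h x) • χ) ≤ dist (g.restrict F) (h.restrict F) := by
        rw [dist_eq_norm, dist_eq_norm]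
        apply (ContinuousMap.norm_le _ (norm_nonneg _)).mpr
        intro z
        by_cases hz : z = x
        · have : (g - (h + (g x - h x) • χ)) z = 0 := by
            rw [hz]
            simp only [ContinuousMap.sub_apply, ContinuousMap.add_apply,
              ContinuousMap.smul_apply, hχx, smul_eq_mul, mul_one]
            ring
          rw [this, norm_zero]; exact norm_nonneg _
        · have : (g - (h + (g x - h x) • χ)) z = (g.restrict F - h.restrict F) ⟨z, hz⟩ := by
            simp [hχz z hz]
          rw [this]
          exact (g.restrict F - h.restrict F).norm_coe_le_norm _
      exact lt_of_le_of_lt hle hd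
    rwa [hclosed.closure_eq] at this
  · -- Case 2: evaluation at x is dominated by the sup norm over F
    push_neg at hP
    have key : ∀ f ∈ A, ‖f x‖ ≤ ‖f.restrict F‖ := by
      intro f hfA
      by_contra hcon
      push_neg at hcon
      have hfx0 : f x ≠ 0 := by
        intro h0
        rw [h0, norm_zero] at hcon
        exact absurd (norm_nonneg _) (not_le.mpr hcon)
      have hgA : (f x)⁻¹ • f ∈ A := A.smul_mem hfA _
      have hgx : ((f x)⁻¹ • f) x = 1 := by
        simp [inv_mul_cancel₀ hfx0]
      have h1 := hP _ hgA hgx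
      have hgr : ‖((f x)⁻¹ • f).restrict F‖ < 1 := by
        have he : ((f x)⁻¹ • f).restrict F = (f x)⁻¹ • f.restrict F := rfl
        rw [he, norm_smul, norm_inv]
        rw [inv_mul_lt_iff₀ (norm_pos_iff.mpr hfx0), mul_one]
        exact hcon
      exact absurd hgr (not_lt.mpr h1)
    have norm_eq : ∀ f ∈ A, ‖f‖ = ‖f.restrict F‖ := by
      intro f hfA
      refine le_antisymm ?_ ?_
      · apply (ContinuousMap.norm_le _ (norm_nonneg _)).mpr
        intro z
        by_cases hzx : z = x
        · rw [hzx]; exact key f hfA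
        · exact hres f z hzx
      · apply (ContinuousMap.norm_le _ (norm_nonneg _)).mpr
        intro w
        exact f.norm_coe_le_norm ↑w
    have inj : ∀ f ∈ A, ∀ g ∈ A, f.restrict F = g.restrict F → f = g := by
      intro f hfA g hgA hfg
      have h1 : ‖f - g‖ = 0 := by
        rw [norm_eq _ (A.sub_mem hfA hgA)]
        have : (f - g).restrict F = f.restrict F - g.restrict F := rfl
        rw [this, hfg, sub_self, norm_zero]
      exact sub_eq_zero.mp (norm_eq_zero.mp h1)
    have surj : ∀ g : C(↥F, ℂ), ∃ f ∈ A, f.restrict F = g := by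
      intro g
      have hg : g ∈ closure ((fun f : C(X, ℂ) => f.restrict F) '' (A : Set C(X, ℂ))) :=
        D.closure_eq ▸ Set.mem_univ g
      obtain ⟨u, huS, hu⟩ := mem_closure_iff_seq_limit.mp hg
      choose v hvA hv using huS
      have hcauchy : CauchySeq v := by
        have hcu : CauchySeq u := hu.cauchySeq
        rw [Metric.cauchySeq_iff] at hcu ⊢
        intro ε hε
        obtain ⟨N, hN⟩ := hcu ε hε
        refine ⟨N, fun m hm n hn => ?_⟩
        have hd : dist (v m) (v n) = dist (u m) (u n) := by
          rw [dist_eq_norm, dist_eq_norm, norm_eq _ (A.sub_mem (hvA m) (hvA n)),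
            ← hv m, ← hv n]
          rfl
        rw [hd]; exact hN m hm n hn
      obtain ⟨f, hf⟩ := cauchySeq_tendsto_of_complete hcauchy
      have hfA : f ∈ A := hclosed.mem_of_tendsto hf (Filter.Eventually.of_forall hvA)
      have htend : Filter.Tendsto u Filter.atTop (nhds (f.restrict F)) := by
        rw [tendsto_iff_dist_tendsto_zero]
        apply squeeze_zero (fun n => dist_nonneg)
        · intro n
          show dist (u n) (f.restrict F) ≤ dist (v n) f
          rw [← hv n, dist_eq_norm, dist_eq_norm]
          apply (ContinuousMap.norm_le _ (norm_nonneg _)).mpr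
          intro w
          exact (v n - f).norm_coe_le_norm ↑w
        · exact tendsto_iff_dist_tendsto_zero.mp hf
      exact ⟨f, hfA, tendsto_nhds_unique htend hu⟩
    -- final contradiction
    by_cases hz : ∃ z ∈ F, ∀ f ∈ A, f x = f z
    · obtain ⟨z, hzF, hzeq⟩ := hz
      have hxz : x ≠ z := fun h => hzF (h ▸ rfl)
      obtain ⟨f, hfA, hfne⟩ := hsep x z hxz
      exact hfne (hzeq f hfA)
    · push_neg at hz
      have hg : ∀ z : ↥F, ∃ g ∈ A, g x = 0 ∧ g ↑z ≠ 0 := by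
        intro z
        obtain ⟨f, hfA, hfne⟩ := hz ↑z z.2
        refine ⟨f - algebraMap ℂ C(X, ℂ) (f x),
          A.sub_mem hfA (A.algebraMap_mem _), by simp, ?_⟩
        simpa [sub_eq_zero] using fun h => hfne h.symm
      choose g hgA hgx hgz using hg
      have hUopen : ∀ z : ↥F, IsOpen {w : X | g z w ≠ 0} := by
        intro z
        have : {w : X | g z w ≠ 0} = (g z) ⁻¹' ({0}ᶜ) := rfl
        rw [this]
        exact (isClosed_singleton.preimage (g z).continuous).isOpen_compl
      have hcover : F ⊆ ⋃ z : ↥F, {w : X | g z w ≠ 0} := by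
        intro w hw
        exact Set.mem_iUnion.mpr ⟨⟨w, hw⟩, hgz ⟨w, hw⟩⟩
      obtain ⟨t, ht⟩ := hFclosed.isCompact.elim_finite_subcover _ hUopen hcover
      have hk : ∀ z : ↥F, ∃ k ∈ A, k.restrict F = star ((g z).restrict F) :=
        fun z => surj _
      choose k hkA hkr using hk
      set h0 : C(X, ℂ) := ∑ z ∈ t, g z * k z with hh0def
      have hh0A : h0 ∈ A := A.sum_mem fun z _ => A.mul_mem (hgA z) (hkA z)
      have hh0x : h0 x = 0 := by
        simp [hh0def, hgx]
      have hkval : ∀ (z : ↥F) (w : ↥F), k z ↑w = star (g z ↑w) := by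
        intro z w
        have := congrArg (fun φ => φ w) (hkr z)
        simpa using this
      have hh0F : ∀ w : ↥F, h0 ↑w ≠ 0 := by
        intro w
        have hval : h0 ↑w = ((∑ z ∈ t, Complex.normSq (g z ↑w) : ℝ) : ℂ) := by
          simp only [hh0def, ContinuousMap.coe_sum, Finset.sum_apply,
            ContinuousMap.mul_apply]
          push_cast
          refine Finset.sum_congr rfl fun z _ => ?_
          rw [hkval z w, ← Complex.mul_conj]
          rfl
        obtain ⟨z0, hz0t, hz0⟩ := Set.mem_iUnion₂.mp (ht w.2)
        have hpos : 0 < ∑ z ∈ t, Complex.normSq (g z ↑w) := by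
          apply Finset.sum_pos' (fun z _ => Complex.normSq_nonneg _)
          exact ⟨z0, hz0t, Complex.normSq_pos.mpr hz0⟩
        rw [hval]
        exact_mod_cast hpos.ne'
      have hcontu : Continuous fun w : ↥F => (h0 ↑w)⁻¹ :=
        (h0.continuous.comp continuous_subtype_val).inv₀ hh0F
      obtain ⟨v, hvA, hvr⟩ := surj ⟨_, hcontu⟩
      have hvval : ∀ w : ↥F, v ↑w = (h0 ↑w)⁻¹ := by
        intro w
        have := congrArg (fun φ => φ w) hvr
        simpa using this
      have hone : v * h0 = 1 := by
        apply inj _ (A.mul_mem hvA hh0A) _ A.one_mem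
        ext w
        simp only [ContinuousMap.restrict_apply, ContinuousMap.mul_apply,
          ContinuousMap.one_apply]
        rw [hvval w]
        exact inv_mul_cancel₀ (hh0F w)
      have : (1 : ℂ) = 0 := by
        have := congrArg (fun φ : C(X, ℂ) => φ x) hone
        simp only [ContinuousMap.mul_apply, ContinuousMap.one_apply] at this
        rw [hh0x, mul_zero] at this
        exact this.symm
      exact one_ne_zero this
end

section
/- Let A be a strongly logmodular proper uniform algebra on a compact Hausdorff space X, i.e., every real-valued continuous function on X equals log|g| for some invertible g ∈ A. If A is pervasive, then A is maximal in C(X). -/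
variable {X : Type} [TopologicalSpace X] [CompactSpace X] [T2Space X]

/-- `A` is strongly logmodular: every real-valued continuous function on `X` is
`log |g|` for some `g` invertible in `A`. -/
def StronglyLogmodular (A : Subalgebra ℂ C(X, ℂ)) : Prop :=
  ∀ u : C(X, ℝ), ∃ g ∈ A, (∃ h ∈ A, g * h = 1) ∧
    ∀ x : X, Real.log ‖g x‖ = u x

set_option linter.unusedSectionVars false
set_option linter.unusedVariables false

lemma invAux (B : Subalgebra ℂ C(X, ℂ)) (hB : IsClosed (B : Set C(X, ℂ)))
    {f : C(X, ℂ)} (hf : f ∈ B) (hn : ‖f‖ < 1) :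
    ∃ k ∈ B, (1 - f) * k = 1 := by
  have hs := summable_geometric_of_norm_lt_one (x := f) hn
  refine ⟨∑' n, f ^ n, ?_, mul_neg_geom_series f hn⟩
  exact hB.mem_of_tendsto hs.hasSum.tendsto_sum_nat
    (Filter.Eventually.of_forall fun n =>
      Subalgebra.sum_mem _ fun i _ => Subalgebra.pow_mem _ hf i)

lemma ofRealCompMem (B : Subalgebra ℂ C(X, ℂ)) (hB : IsClosed (B : Set C(X, ℂ)))
    (ρ : C(X, ℝ))
    (hρ : (⟨fun x => ((ρ x : ℝ) : ℂ), Complex.continuous_ofReal.comp ρ.continuous⟩ : C(X, ℂ)) ∈ B)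
    (φ : ℝ → ℝ) (hφ : Continuous φ) :
    (⟨fun x => ((φ (ρ x) : ℝ) : ℂ),
      Complex.continuous_ofReal.comp (hφ.comp ρ.continuous)⟩ : C(X, ℂ)) ∈ B := by
  set r : C(X, ℂ) := ⟨fun x => ((ρ x : ℝ) : ℂ), Complex.continuous_ofReal.comp ρ.continuous⟩
  set e : C(X, ℂ) := ⟨fun x => ((φ (ρ x) : ℝ) : ℂ),
      Complex.continuous_ofReal.comp (hφ.comp ρ.continuous)⟩
  have : e ∈ closure (B : Set C(X, ℂ)) := by
    rw [Metric.mem_closure_iff]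
    intro ε hε
    obtain ⟨p, hp⟩ := exists_polynomial_near_of_continuousOn (-‖ρ‖) ‖ρ‖ φ
      hφ.continuousOn (ε / 2) (half_pos hε)
    set q : C(X, ℂ) := Polynomial.aeval r (p.map (algebraMap ℝ ℂ)) with hq
    have hqB : q ∈ B :=
      Algebra.adjoin_le (Set.singleton_subset_iff.mpr hρ)
        (Polynomial.aeval_mem_adjoin_singleton ℂ r)
    refine ⟨q, hqB, ?_⟩
    have hd : dist e q ≤ ε / 2 := by
      rw [ContinuousMap.dist_le (le_of_lt (half_pos hε))]
      intro x
      have hx : ρ x ∈ Set.Icc (-‖ρ‖) ‖ρ‖ := by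
        constructor
        · linarith [neg_abs_le (ρ x), (ρ.norm_coe_le_norm x : ‖ρ x‖ ≤ ‖ρ‖),
            abs_le.mp (ρ.norm_coe_le_norm x)]
        · exact le_trans (le_abs_self _) (ρ.norm_coe_le_norm x)
      have hqx : q x = ((p.eval (ρ x) : ℝ) : ℂ) := by
        rw [hq, Polynomial.aeval_continuousMap_apply]
        show ((p.map (algebraMap ℝ ℂ)).eval ((ρ x : ℝ) : ℂ)) = _
        rw [Polynomial.eval_map]
        have := Polynomial.hom_eval₂ p (RingHom.id ℝ) (algebraMap ℝ ℂ) (ρ x)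
        simpa using this.symm
      rw [hqx]
      show dist ((φ (ρ x) : ℝ) : ℂ) _ ≤ ε / 2
      rw [Complex.isometry_ofReal.dist_eq]
      rw [Real.dist_eq]
      rw [abs_sub_comm]
      exact le_of_lt (hp (ρ x) hx)
    linarith [hd]
  rwa [hB.closure_eq] at this

lemma mulMemAux (A B : Subalgebra ℂ C(X, ℂ)) (hperv : Pervasive A) (hAB : A ≤ B)
    (hB : IsClosed (B : Set C(X, ℂ)))
    {e : C(X, ℂ)} (he : e ∈ B) {F : Set X} (hF : IsClosed F) (hFne : F.Nonempty)
    (hFprop : F ≠ Set.univ) (hvan : ∀ x ∉ F, e x = 0) (h : C(X, ℂ)) :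
    e * h ∈ B := by
  haveI : CompactSpace F := isCompact_iff_compactSpace.mp hF.isCompact
  have : e * h ∈ closure (B : Set C(X, ℂ)) := by
    rw [Metric.mem_closure_iff]
    intro ε hε
    have hd := hperv F hF hFne hFprop
    have hmem := Metric.mem_closure_iff.mp (hd (h.restrict F)) (ε / (‖e‖ + 1))
      (by positivity)
    obtain ⟨-, ⟨a, haA, rfl⟩, hdist⟩ := hmem
    refine ⟨e * a, B.mul_mem he (hAB haA), ?_⟩
    have hle : dist (e * h) (e * a) ≤ ‖e‖ * (ε / (‖e‖ + 1)) := by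
      rw [ContinuousMap.dist_le (by positivity)]
      intro x
      by_cases hx : x ∈ F
      · have h1 : dist ((e * h) x) ((e * a) x) = ‖e x‖ * dist (h x) (a x) := by
          simp only [ContinuousMap.mul_apply, dist_eq_norm, ← mul_sub, norm_mul]
        rw [h1]
        refine mul_le_mul (e.norm_coe_le_norm x) ?_ dist_nonneg (norm_nonneg e)
        have := ContinuousMap.dist_apply_le_dist (f := h.restrict F)
          (g := a.restrict F) (⟨x, hx⟩ : F)
        simp only [ContinuousMap.restrict_apply] at this
        exact le_of_lt (lt_of_le_of_lt this hdist)
      · simp [ContinuousMap.mul_apply, hvan x hx]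
        positivity
    have hln : ‖e‖ * (ε / (‖e‖ + 1)) < ε := by
      rw [mul_div_assoc']
      rw [div_lt_iff₀ (by positivity)]
      nlinarith [norm_nonneg e]
    exact lt_of_le_of_lt hle hln
  rwa [hB.closure_eq] at this

lemma keyAux (A B : Subalgebra ℂ C(X, ℂ)) (hperv : Pervasive A) (hAB : A ≤ B)
    (hB : IsClosed (B : Set C(X, ℂ))) (ρ : C(X, ℝ))
    (hρB : (⟨fun x => ((ρ x : ℝ) : ℂ),
      Complex.continuous_ofReal.comp ρ.continuous⟩ : C(X, ℂ)) ∈ B)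
    {z w : X} (hzw : ρ z ≠ ρ w) : B = ⊤ := by
  obtain ⟨xm, -, hxm'⟩ := isCompact_univ.exists_isMinOn ⟨z, Set.mem_univ z⟩
    ρ.continuous.continuousOn
  obtain ⟨xM, -, hxM'⟩ := isCompact_univ.exists_isMaxOn ⟨z, Set.mem_univ z⟩
    ρ.continuous.continuousOn
  have hxm : ∀ y : X, ρ xm ≤ ρ y := fun y => hxm' (Set.mem_univ y)
  have hxM : ∀ y : X, ρ y ≤ ρ xM := fun y => hxM' (Set.mem_univ y)
  obtain ⟨m, hm⟩ : ∃ m, m = ρ xm := ⟨_, rfl⟩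
  obtain ⟨M, hM⟩ : ∃ M, M = ρ xM := ⟨_, rfl⟩
  rw [← hm] at hxm
  rw [← hM] at hxM
  have hmM : m < M := by
    rcases lt_or_ge m M with h | h
    · exact h
    · exfalso
      have h1 : ρ z = m := le_antisymm (le_trans (hxM z) h) (hxm z)
      have h2 : ρ w = m := le_antisymm (le_trans (hxM w) h) (hxm w)
      exact hzw (h1.trans h2.symm)
  obtain ⟨c1, hc1⟩ : ∃ c1 : ℝ, c1 = m + (M - m) / 3 := ⟨_, rfl⟩
  obtain ⟨c2, hc2⟩ : ∃ c2 : ℝ, c2 = m + 2 * (M - m) / 3 := ⟨_, rfl⟩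
  have hc12 : c1 < c2 := by rw [hc1, hc2]; linarith
  have hxmc2 : ρ xm ≤ c2 := by linarith
  set φ₀ : ℝ → ℝ := fun t => min 1 (max 0 ((c2 - t) / (c2 - c1))) with hφ₀
  have hφ₀c : Continuous φ₀ :=
    continuous_const.min (continuous_const.max ((continuous_const.sub continuous_id).div_const _))
  set e₀ : C(X, ℂ) := ⟨fun x => ((φ₀ (ρ x) : ℝ) : ℂ),
    Complex.continuous_ofReal.comp (hφ₀c.comp ρ.continuous)⟩ with he₀def
  have he₀B : e₀ ∈ B := ofRealCompMem B hB ρ hρB φ₀ hφ₀c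
  rw [Algebra.eq_top_iff]
  intro h
  have h1 : e₀ * h ∈ B := by
    refine mulMemAux A B hperv hAB hB he₀B (F := ρ ⁻¹' Set.Iic c2)
      (isClosed_Iic.preimage ρ.continuous) ⟨xm, by simp only [Set.mem_preimage, Set.mem_Iic]; linarith⟩
      ?_ ?_ h
    · apply (Set.ne_univ_iff_exists_notMem _).mpr
      exact ⟨xM, by simp only [Set.mem_preimage, Set.mem_Iic, not_le]; linarith⟩
    · intro x hx
      simp only [Set.mem_preimage, Set.mem_Iic, not_le] at hx
      have : (c2 - ρ x) / (c2 - c1) ≤ 0 :=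
        div_nonpos_of_nonpos_of_nonneg (by linarith) (by linarith)
      have : φ₀ (ρ x) = 0 := by
        rw [hφ₀]
        simp only
        rw [max_eq_left this, min_eq_right zero_le_one]
      simp [he₀def, this]
  have h2 : (1 - e₀) * h ∈ B := by
    refine mulMemAux A B hperv hAB hB (B.sub_mem B.one_mem he₀B) (F := ρ ⁻¹' Set.Ici c1)
      (isClosed_Ici.preimage ρ.continuous) ⟨xM, by simp only [Set.mem_preimage, Set.mem_Ici]; linarith⟩
      ?_ ?_ h
    · apply (Set.ne_univ_iff_exists_notMem _).mpr
      exact ⟨xm, by simp only [Set.mem_preimage, Set.mem_Ici, not_le]; linarith⟩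
    · intro x hx
      simp only [Set.mem_preimage, Set.mem_Ici, not_le] at hx
      have h3 : (1 : ℝ) ≤ (c2 - ρ x) / (c2 - c1) := by
        rw [le_div_iff₀ (by linarith)]
        linarith
      have : φ₀ (ρ x) = 1 := by
        rw [hφ₀]
        simp only
        rw [max_eq_right (by linarith), min_eq_left h3]
      simp [he₀def, this]
  have : h = e₀ * h + (1 - e₀) * h := by ring
  rw [this]
  exact B.add_mem h1 h2

/-- A strongly logmodular, proper, pervasive uniform algebra is maximal in `C(X, ℂ)`. -/
theorem stmt_13 (A : Subalgebra ℂ C(X, ℂ))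
    (hclosed : IsClosed (A : Set C(X, ℂ)))
    (hsep : ∀ x y : X, x ≠ y → ∃ f ∈ A, f x ≠ f y)
    (hslm : StronglyLogmodular A)
    (hproper : A ≠ ⊤)
    (hperv : Pervasive A) :
    ∀ B : Subalgebra ℂ C(X, ℂ), IsClosed (B : Set C(X, ℂ)) → A ≤ B →
      B = A ∨ B = ⊤ := by
  intro B hB hAB
  by_cases hBtop : B = ⊤
  · exact Or.inr hBtop
  cases isEmpty_or_nonempty X with
  | inl hempty =>
    exfalso
    apply hproper
    rw [Algebra.eq_top_iff]
    intro f
    have : f = 0 := ContinuousMap.ext fun x => (IsEmpty.false x).elim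
    rw [this]; exact A.zero_mem
  | inr hne =>
  left
  refine le_antisymm ?_ hAB
  intro f hfB
  -- setup
  set M : ℝ := ‖f‖ + 1 with hMdef
  have hM0 : (0 : ℝ) < M := by positivity
  set fM : C(X, ℂ) := f + algebraMap ℂ C(X, ℂ) (M : ℂ) with hfMdef
  have hfMB : fM ∈ B := B.add_mem hfB (B.algebraMap_mem _)
  have habs : ∀ x, 1 ≤ ‖fM x‖ := by
    intro x
    have h1 : ‖f x‖ ≤ ‖f‖ := f.norm_coe_le_norm x
    have h2 : ‖((M : ℝ) : ℂ)‖ = M := by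
      rw [Complex.norm_real, Real.norm_eq_abs, abs_of_pos hM0]
    have h3 : fM x = f x + ((M : ℝ) : ℂ) := by
      simp [hfMdef]
    have h4 : ‖((M : ℝ) : ℂ)‖ ≤ ‖fM x‖ + ‖f x‖ := by
      calc ‖((M : ℝ) : ℂ)‖ = ‖fM x - f x‖ := by rw [h3]; ring_nf
        _ ≤ ‖fM x‖ + ‖f x‖ := norm_sub_le _ _
    rw [h2] at h4
    linarith [h4, h1]
  have habs0 : ∀ x, fM x ≠ 0 := by
    intro x hx
    have := habs x
    rw [hx] at this
    simp at this
    linarith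
  -- strongly logmodular application
  set u₀ : C(X, ℝ) := ⟨fun x => -Real.log ‖fM x‖,
    (Continuous.log (continuous_norm.comp fM.continuous)
      (fun x => ne_of_gt (lt_of_lt_of_le one_pos (habs x)))).neg⟩ with hu₀def
  obtain ⟨g, hgA, ⟨h, hhA, hgh⟩, hlog⟩ := hslm u₀
  have hgx : ∀ x, g x ≠ 0 := by
    intro x
    have : (g * h) x = (1 : C(X, ℂ)) x := by rw [hgh]
    simp only [ContinuousMap.mul_apply, ContinuousMap.one_apply] at this
    exact left_ne_zero_of_mul_eq_one this
  have habsg : ∀ x, ‖g x‖ * ‖fM x‖ = 1 := by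
    intro x
    have hpos : 0 < ‖g x‖ * ‖fM x‖ :=
      mul_pos (norm_pos_iff.mpr (hgx x)) (norm_pos_iff.mpr (habs0 x))
    have hl : Real.log (‖g x‖ * ‖fM x‖) = 0 := by
      rw [Real.log_mul (by simpa using hgx x) (by simpa using habs0 x)]
      have := hlog x
      rw [this]
      simp [hu₀def]
    have := Real.exp_log hpos
    rw [hl, Real.exp_zero] at this
    exact this.symm
  set u : C(X, ℂ) := g * fM with hudef
  have huB : u ∈ B := B.mul_mem (hAB hgA) hfMB
  have habsu : ∀ x, ‖u x‖ = 1 := by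
    intro x
    simp only [hudef, ContinuousMap.mul_apply, norm_mul]
    exact habsg x
  by_cases hconst : ∀ z w : X, u z = u w
  · -- u is constant, so f ∈ A
    obtain ⟨x₀⟩ := hne
    obtain ⟨c, hc⟩ : ∃ c : ℂ, c = u x₀ := ⟨_, rfl⟩
    have hu_eq : u = algebraMap ℂ C(X, ℂ) c :=
      ContinuousMap.ext fun zz => by rw [hconst zz x₀, ← hc]; simp
    have hfM_eq : fM = h * algebraMap ℂ C(X, ℂ) c := by
      calc fM = 1 * fM := (one_mul fM).symm
        _ = (g * h) * fM := by rw [hgh]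
        _ = h * (g * fM) := by ring
        _ = h * algebraMap ℂ C(X, ℂ) c := by rw [← hudef, hu_eq]
    have hfMA : fM ∈ A := by
      rw [hfM_eq]
      exact A.mul_mem hhA (A.algebraMap_mem _)
    have : f = fM - algebraMap ℂ C(X, ℂ) (M : ℂ) := by rw [hfMdef]; ring
    rw [this]
    exact A.sub_mem hfMA (A.algebraMap_mem _)
  · -- u nonconstant : contradiction with B ≠ ⊤
    exfalso
    push_neg at hconst
    obtain ⟨z, w, hzw⟩ := hconst
    -- conj u ∈ B
    set wgt : C(X, ℂ) := -(((M : ℝ) : ℂ)⁻¹ • f) with hwgt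
    have hwB : wgt ∈ B := B.neg_mem (B.smul_mem hfB _)
    have hwn : ‖wgt‖ < 1 := by
      rw [hwgt, norm_neg, norm_smul]
      have : ‖((M : ℝ) : ℂ)⁻¹‖ = M⁻¹ := by
        rw [norm_inv, Complex.norm_real, Real.norm_eq_abs, abs_of_pos hM0]
      rw [this]
      rw [inv_mul_lt_iff₀ hM0] -- M⁻¹ * ‖f‖ < 1 ↔ ‖f‖ < M ?
      simp [hMdef]
    obtain ⟨k, hkB, hk⟩ := invAux B hB hwB hwn
    have hMne : ((M : ℝ) : ℂ) ≠ 0 := by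
      simp only [ne_eq, Complex.ofReal_eq_zero]
      exact ne_of_gt hM0
    have hfM_smul : fM = ((M : ℝ) : ℂ) • (1 - wgt) := by
      rw [hwgt, hfMdef]
      rw [smul_sub, smul_neg, smul_smul, mul_inv_cancel₀ hMne, one_smul]
      rw [Algebra.algebraMap_eq_smul_one]
      ring
    have hfMk : fM * (((M : ℝ) : ℂ)⁻¹ • k) = 1 := by
      rw [hfM_smul]
      rw [smul_mul_smul_comm, mul_inv_cancel₀ hMne, one_smul, hk]
    set u' : C(X, ℂ) := h * (((M : ℝ) : ℂ)⁻¹ • k) with hu'def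
    have hu'B : u' ∈ B := B.mul_mem (hAB hhA) (B.smul_mem hkB _)
    have huu' : u * u' = 1 := by
      rw [hudef, hu'def, mul_mul_mul_comm, hgh, hfMk, one_mul]
    have hux : ∀ x, u x ≠ 0 := by
      intro x hx
      have := habsu x
      rw [hx] at this
      simp at this
    have hu'conj : ∀ x, u' x = starRingEnd ℂ (u x) := by
      intro x
      have h1 : u x * u' x = 1 := by
        have : (u * u') x = (1 : C(X, ℂ)) x := by rw [huu']
        simpa [ContinuousMap.mul_apply] using this
      have h2 : u x * starRingEnd ℂ (u x) = 1 := by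
        rw [Complex.mul_conj]
        rw [Complex.normSq_eq_norm_sq, habsu x]
        norm_num
      exact mul_left_cancel₀ (hux x) (h1.trans h2.symm)
    -- split into real and imaginary parts
    have hrecase : (u z).re ≠ (u w).re ∨ (u z).im ≠ (u w).im := by
      by_contra hcon
      push_neg at hcon
      exact hzw (Complex.ext hcon.1 hcon.2)
    cases hrecase with
    | inl hre =>
      set ρ : C(X, ℝ) := ⟨fun x => 2 * (u x).re,
        (continuous_const.mul (Complex.continuous_re.comp u.continuous))⟩ with hρdef
      have hρB : (⟨fun x => ((ρ x : ℝ) : ℂ),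
          Complex.continuous_ofReal.comp ρ.continuous⟩ : C(X, ℂ)) ∈ B := by
        have : (⟨fun x => ((ρ x : ℝ) : ℂ),
            Complex.continuous_ofReal.comp ρ.continuous⟩ : C(X, ℂ)) = u + u' := by
          ext x
          simp only [ContinuousMap.coe_mk, ContinuousMap.add_apply, hu'conj x]
          rw [Complex.add_conj]
          simp [hρdef]
        rw [this]
        exact B.add_mem huB hu'B
      have hzw' : ρ z ≠ ρ w := by
        simp only [hρdef, ContinuousMap.coe_mk]
        intro hcon
        apply hre
        linarith [hcon]
      exact hBtop (keyAux A B hperv hAB hB ρ hρB hzw')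
    | inr him =>
      set ρ : C(X, ℝ) := ⟨fun x => 2 * (u x).im,
        (continuous_const.mul (Complex.continuous_im.comp u.continuous))⟩ with hρdef
      have hρB : (⟨fun x => ((ρ x : ℝ) : ℂ),
          Complex.continuous_ofReal.comp ρ.continuous⟩ : C(X, ℂ)) ∈ B := by
        have : (⟨fun x => ((ρ x : ℝ) : ℂ),
            Complex.continuous_ofReal.comp ρ.continuous⟩ : C(X, ℂ))
            = (-Complex.I) • (u - u') := by
          ext x
          simp only [ContinuousMap.coe_mk, ContinuousMap.smul_apply,
            ContinuousMap.sub_apply, hu'conj x]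
          rw [Complex.sub_conj]
          have hI : Complex.I * Complex.I = -1 := Complex.I_mul_I
          simp only [hρdef, ContinuousMap.coe_mk, smul_eq_mul]
          push_cast
          linear_combination ((2:ℂ) * ((u x).im : ℂ)) * hI
        rw [this]
        exact B.smul_mem (B.sub_mem huB hu'B) _
      have hzw' : ρ z ≠ ρ w := by
        simp only [hρdef, ContinuousMap.coe_mk]
        intro hcon
        apply him
        linarith [hcon]
      exact hBtop (keyAux A B hperv hAB hB ρ hρB hzw')
end

section
/- Let A be a proper pervasive uniform algebra on a compact Hausdorff space X containing a nonconstant function u ∈ A with |u(x)| = 1 for all x ∈ X. Then the maximal ideal space of A is strictly larger than X; equivalently, there exists a character φ of A that is not evaluation at any point of X. -/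
variable {X : Type} [TopologicalSpace X] [CompactSpace X] [T2Space X]

open Complex Polynomial

/-- If a pervasive algebra contains a real-valued function taking two distinct values,
then it is dense. -/
lemma pervasive_dense_of_real (A : Subalgebra ℂ C(X, ℂ))
    (hperv : Pervasive A)
    (f : C(X, ℂ)) (hf : f ∈ A) (hfre : ∀ x : X, (f x).im = 0)
    (x0 y0 : X) (hlt : (f x0).re < (f y0).re) :
    ∀ g : C(X, ℂ), g ∈ closure (A : Set C(X, ℂ)) := by
  set α : ℝ := (f x0).re with hα
  set β : ℝ := (f y0).re with hβ
  set δ' : ℝ := α + (β - α) / 3 with hδ'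
  set δ : ℝ := α + 2 * (β - α) / 3 with hδ
  have hαδ' : α < δ' := by rw [hδ']; linarith
  have hδ'δ : δ' < δ := by rw [hδ', hδ]; linarith
  have hδβ : δ < β := by rw [hδ]; linarith
  have hcont : Continuous fun x : X => (f x).re :=
    Complex.continuous_re.comp f.continuous
  set F : Set X := {x : X | (f x).re ≤ δ} with hF
  set K : Set X := {x : X | δ' ≤ (f x).re} with hK
  have hFclosed : IsClosed F := isClosed_le hcont continuous_const
  have hKclosed : IsClosed K := isClosed_le continuous_const hcont
  have hFne : F.Nonempty := ⟨x0, by simp only [hF, Set.mem_setOf_eq]; linarith⟩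
  have hKne : K.Nonempty := ⟨y0, by simp only [hK, Set.mem_setOf_eq]; linarith⟩
  have hFproper : F ≠ Set.univ := by
    intro h
    have : y0 ∈ F := h ▸ Set.mem_univ y0
    simp only [hF, Set.mem_setOf_eq] at this
    linarith
  have hKproper : K ≠ Set.univ := by
    intro h
    have : x0 ∈ K := h ▸ Set.mem_univ x0
    simp only [hK, Set.mem_setOf_eq] at this
    linarith
  have hFK : ∀ x : X, x ∈ F ∨ x ∈ K := by
    intro x
    by_cases h : (f x).re ≤ δ
    · exact Or.inl h
    · exact Or.inr (le_of_lt (lt_trans hδ'δ (lt_of_not_ge h)))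
  haveI : CompactSpace ↥F := isCompact_iff_compactSpace.mp (hFclosed.isCompact)
  haveI : CompactSpace ↥K := isCompact_iff_compactSpace.mp (hKclosed.isCompact)
  intro g
  rw [Metric.mem_closure_iff]
  intro ε hε
  set ε' : ℝ := ε / 16 with hε'
  have hε'pos : 0 < ε' := by positivity
  -- approximate g on F by b ∈ A
  obtain ⟨-, ⟨b, hbA, rfl⟩, hb⟩ :=
    Metric.mem_closure_iff.mp
      ((hperv F hFclosed hFne hFproper) (g.restrict F)) ε' hε'pos
  -- approximate g on K by a ∈ A
  obtain ⟨-, ⟨a, haA, rfl⟩, ha⟩ :=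
    Metric.mem_closure_iff.mp
      ((hperv K hKclosed hKne hKproper) (g.restrict K)) ε' hε'pos
  have hbF : ∀ x ∈ F, ‖b x - g x‖ ≤ ε' := by
    intro x hx
    have h := ContinuousMap.dist_apply_le_dist (f := g.restrict F) (g := b.restrict F) ⟨x, hx⟩
    have h2 : ‖g x - b x‖ ≤ dist (g.restrict F) (b.restrict F) := by
      simpa [ContinuousMap.restrict_apply, Complex.dist_eq] using h
    rw [norm_sub_rev]
    exact h2.trans hb.le
  have haK : ∀ x ∈ K, ‖a x - g x‖ ≤ ε' := by
    intro x hx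
    have h := ContinuousMap.dist_apply_le_dist (f := g.restrict K) (g := a.restrict K) ⟨x, hx⟩
    have h2 : ‖g x - a x‖ ≤ dist (g.restrict K) (a.restrict K) := by
      simpa [ContinuousMap.restrict_apply, Complex.dist_eq] using h
    rw [norm_sub_rev]
    exact h2.trans ha.le
  -- the constant C bounding everything
  set C : ℝ := ‖a‖ + ‖b‖ + ‖g‖ + 1 with hC
  have hCpos : 0 < C := by positivity
  set η : ℝ := min 1 (ε / (4 * C)) with hη
  have hηpos : 0 < η := lt_min one_pos (by positivity)
  have hη1 : η ≤ 1 := min_le_left _ _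
  have hηC : C * η ≤ ε / 4 := by
    have h2 : η ≤ ε / (4 * C) := min_le_right _ _
    calc C * η ≤ C * (ε / (4 * C)) := by
          exact mul_le_mul_of_nonneg_left h2 (le_of_lt hCpos)
      _ = ε / 4 := by field_simp
  -- the cutoff real function
  set s : ℝ → ℝ := fun t => max 0 (min 1 ((t - δ') / (δ - δ'))) with hs
  have hscont : Continuous s := by
    apply continuous_const.max
    apply continuous_const.min
    exact (continuous_id.sub continuous_const).div_const _
  have hs01 : ∀ t, 0 ≤ s t ∧ s t ≤ 1 := by
    intro t
    constructor
    · exact le_max_left _ _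
    · simp only [hs]
      rcases le_or_gt ((t - δ') / (δ - δ')) 1 with h | h
      · exact max_le zero_le_one (le_trans (min_le_right _ _) h)
      · exact max_le zero_le_one (by rw [min_eq_left (le_of_lt h)])
  have hs0 : ∀ t, t ≤ δ' → s t = 0 := by
    intro t ht
    have hnum : (t - δ') / (δ - δ') ≤ 0 :=
      div_nonpos_of_nonpos_of_nonneg (by linarith) (by linarith)
    simp only [hs]
    rw [max_eq_left]
    exact le_trans (min_le_right _ _) hnum
  have hs1 : ∀ t, δ ≤ t → s t = 1 := by
    intro t ht
    have hnum : 1 ≤ (t - δ') / (δ - δ') := by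
      rw [le_div_iff₀ (by linarith)]
      linarith
    simp only [hs]
    rw [min_eq_left hnum, max_eq_right zero_le_one]
  -- polynomial approximation of s
  set N : ℝ := ‖f‖ with hN
  obtain ⟨p, hp⟩ := exists_polynomial_near_of_continuousOn (-N) N s
    hscont.continuousOn η hηpos
  set P : ℂ[X] := p.map (algebraMap ℝ ℂ) with hP
  set w : C(X, ℂ) := Polynomial.aeval f P with hw
  have hwA : w ∈ A := by
    have h1 : Polynomial.aeval f P ∈ Algebra.adjoin ℂ ({f} : Set C(X, ℂ)) :=
      Polynomial.aeval_mem_adjoin_singleton ℂ f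
    have h2 : Algebra.adjoin ℂ ({f} : Set C(X, ℂ)) ≤ A :=
      Algebra.adjoin_le (Set.singleton_subset_iff.mpr hf)
    exact h2 h1
  -- pointwise value of w
  have hwval : ∀ x : X, w x = ((p.eval ((f x).re) : ℝ) : ℂ) := by
    intro x
    have hfx : f x = (((f x).re : ℝ) : ℂ) := by
      apply Complex.ext
      · simp
      · simp [hfre x]
    rw [hw, Polynomial.aeval_continuousMap_apply, hP, Polynomial.eval_map, hfx]
    have : ((( (f x).re : ℝ) : ℂ)) = algebraMap ℝ ℂ ((f x).re) := rfl
    rw [this, Polynomial.eval₂_at_apply]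
    rfl
  have hrange : ∀ x : X, (f x).re ∈ Set.Icc (-N) N := by
    intro x
    have h1 : |(f x).re| ≤ ‖f x‖ := Complex.abs_re_le_norm _
    have h2 : ‖f x‖ ≤ N := f.norm_coe_le_norm x
    rw [Set.mem_Icc]
    constructor <;> [linarith [neg_abs_le ((f x).re)]; linarith [le_abs_self ((f x).re)]]
  have hpw : ∀ x : X, |p.eval ((f x).re) - s ((f x).re)| ≤ η :=
    fun x => le_of_lt (hp _ (hrange x))
  -- the candidate approximant
  set c : C(X, ℂ) := b * (1 - w) + a * w with hc
  have hcA : c ∈ A := by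
    apply A.add_mem
    · exact A.mul_mem hbA (A.sub_mem (A.one_mem) hwA)
    · exact A.mul_mem haA hwA
  refine ⟨c, hcA, ?_⟩
  have key : ∀ x : X, dist (g x) (c x) ≤ ε / 2 := by
    intro x
    set r : ℝ := (f x).re with hr
    have hid : g x - c x = (g x - b x) * (1 - w x) + (g x - a x) * (w x) := by
      simp only [hc, ContinuousMap.add_apply, ContinuousMap.mul_apply,
        ContinuousMap.sub_apply, ContinuousMap.one_apply]
      ring
    have hwx : ‖w x‖ ≤ s r + η := by
      rw [hwval x, Complex.norm_real, Real.norm_eq_abs]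
      have := hpw x
      have h0 := (hs01 r).1
      calc |p.eval r| = |s r + (p.eval r - s r)| := by ring_nf
        _ ≤ |s r| + |p.eval r - s r| := abs_add_le _ _
        _ ≤ s r + η := by rw [_root_.abs_of_nonneg h0]; linarith
    have h1wx : ‖1 - w x‖ ≤ (1 - s r) + η := by
      rw [hwval x]
      have : (1 : ℂ) - ((p.eval r : ℝ) : ℂ) = (((1 - p.eval r : ℝ) : ℝ) : ℂ) := by
        push_cast; ring
      rw [this, Complex.norm_real, Real.norm_eq_abs]
      have := hpw x
      have h1 := (hs01 r).2
      calc |1 - p.eval r| = |(1 - s r) + (s r - p.eval r)| := by ring_nf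
        _ ≤ |1 - s r| + |s r - p.eval r| := abs_add_le _ _
        _ ≤ (1 - s r) + η := by
            rw [_root_.abs_of_nonneg (by linarith), abs_sub_comm]; linarith
    -- crude bounds
    have hna : (0:ℝ) ≤ ‖a‖ := norm_nonneg _
    have hnb : (0:ℝ) ≤ ‖b‖ := norm_nonneg _
    have hng : (0:ℝ) ≤ ‖g‖ := norm_nonneg _
    have hbgen : ‖g x - b x‖ ≤ C := by
      calc ‖g x - b x‖ ≤ ‖g x‖ + ‖b x‖ :=
            norm_sub_le (g x) (b x)
        _ ≤ ‖g‖ + ‖b‖ := add_le_add (g.norm_coe_le_norm x) (b.norm_coe_le_norm x)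
        _ ≤ C := by rw [hC]; linarith
    have hagen : ‖g x - a x‖ ≤ C := by
      calc ‖g x - a x‖ ≤ ‖g x‖ + ‖a x‖ :=
            norm_sub_le (g x) (a x)
        _ ≤ ‖g‖ + ‖a‖ := add_le_add (g.norm_coe_le_norm x) (a.norm_coe_le_norm x)
        _ ≤ C := by rw [hC]; linarith
    have hsr0 : 0 ≤ s r := (hs01 r).1
    have hsr1 : s r ≤ 1 := (hs01 r).2
    have hwabs : 0 ≤ ‖w x‖ := norm_nonneg _
    have h1wabs : 0 ≤ ‖1 - w x‖ := norm_nonneg _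
    have hsplit : dist (g x) (c x) ≤
        ‖g x - b x‖ * ‖1 - w x‖ +
        ‖g x - a x‖ * ‖w x‖ := by
      rw [Complex.dist_eq, hid]
      calc ‖(g x - b x) * (1 - w x) + (g x - a x) * (w x)‖ ≤
          ‖(g x - b x) * (1 - w x)‖ + ‖(g x - a x) * (w x)‖ :=
            norm_add_le _ _
        _ = _ := by rw [norm_mul, norm_mul]
    by_cases hxK : x ∈ K
    · have ht2 : ‖g x - a x‖ * ‖w x‖ ≤ ε' * 2 := by
        have h1 : ‖g x - a x‖ ≤ ε' := by
          rw [← norm_neg]; simpa using haK x hxK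
        have h2 : ‖w x‖ ≤ 2 := le_trans hwx (by linarith)
        exact mul_le_mul h1 h2 hwabs (le_of_lt hε'pos)
      by_cases hxF : x ∈ F
      · have ht1 : ‖g x - b x‖ * ‖1 - w x‖ ≤ ε' * 2 := by
          have h1 : ‖g x - b x‖ ≤ ε' := by
            rw [← norm_neg]; simpa using hbF x hxF
          have h2 : ‖1 - w x‖ ≤ 2 := le_trans h1wx (by linarith)
          exact mul_le_mul h1 h2 h1wabs (le_of_lt hε'pos)
        calc dist (g x) (c x) ≤ _ := hsplit
          _ ≤ ε' * 2 + ε' * 2 := add_le_add ht1 ht2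
          _ ≤ ε / 2 := by rw [hε']; linarith
      · have hrδ : δ ≤ r := by
          simp only [hF, Set.mem_setOf_eq, not_le] at hxF
          exact le_of_lt hxF
        have hsr : s r = 1 := hs1 r hrδ
        have ht1 : ‖g x - b x‖ * ‖1 - w x‖ ≤ C * η := by
          have h2 : ‖1 - w x‖ ≤ η := by
            have := h1wx; rw [hsr] at this; linarith
          exact mul_le_mul hbgen h2 h1wabs (le_of_lt hCpos)
        calc dist (g x) (c x) ≤ _ := hsplit
          _ ≤ C * η + ε' * 2 := add_le_add ht1 ht2
          _ ≤ ε / 4 + ε' * 2 := by linarith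
          _ ≤ ε / 2 := by rw [hε']; linarith
    · have hrδ' : r ≤ δ' := by
        simp only [hK, Set.mem_setOf_eq, not_le] at hxK
        exact le_of_lt hxK
      have hxF : x ∈ F := by
        simp only [hF, Set.mem_setOf_eq]; linarith
      have hsr : s r = 0 := hs0 r hrδ'
      have ht2 : ‖g x - a x‖ * ‖w x‖ ≤ C * η := by
        have h2 : ‖w x‖ ≤ η := by
          have := hwx; rw [hsr] at this; linarith
        exact mul_le_mul hagen h2 hwabs (le_of_lt hCpos)
      have ht1 : ‖g x - b x‖ * ‖1 - w x‖ ≤ ε' * 2 := by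
        have h1 : ‖g x - b x‖ ≤ ε' := by
          rw [← norm_neg]; simpa using hbF x hxF
        have h2 : ‖1 - w x‖ ≤ 2 := le_trans h1wx (by linarith)
        exact mul_le_mul h1 h2 h1wabs (le_of_lt hε'pos)
      calc dist (g x) (c x) ≤ _ := hsplit
        _ ≤ ε' * 2 + C * η := add_le_add ht1 ht2
        _ ≤ ε' * 2 + ε / 4 := by linarith
        _ ≤ ε / 2 := by rw [hε']; linarith
  calc dist g c ≤ ε / 2 := (ContinuousMap.dist_le (by positivity)).mpr key
    _ < ε := by linarith

/-- If a proper pervasive uniform algebra contains a nonconstant unimodular function,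
then some character of `A` is not evaluation at any point of `X`. -/
theorem stmt_14 (A : Subalgebra ℂ C(X, ℂ))
    (hclosed : IsClosed (A : Set C(X, ℂ)))
    (hsep : ∀ x y : X, x ≠ y → ∃ f ∈ A, f x ≠ f y)
    (hperv : Pervasive A) (hproper : A ≠ ⊤)
    (u : C(X, ℂ)) (hu : u ∈ A) (hunc : ∃ x y : X, u x ≠ u y)
    (humod : ∀ x : X, ‖u x‖ = 1) :
    ∃ φ : A →ₐ[ℂ] ℂ, ∀ x : X, ∃ f : A, φ f ≠ (f : C(X, ℂ)) x := by
  classical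
  -- Every real-valued element of A is constant
  have hconst : ∀ f : C(X, ℂ), f ∈ A → (∀ x : X, (f x).im = 0) →
      ∀ x y : X, f x = f y := by
    intro f hf hfre x y
    by_contra hne
    have hrene : (f x).re ≠ (f y).re := by
      intro h
      exact hne (Complex.ext h (by rw [hfre x, hfre y]))
    have hdense : ∀ g : C(X, ℂ), g ∈ closure (A : Set C(X, ℂ)) := by
      rcases lt_or_gt_of_ne hrene with h | h
      · exact pervasive_dense_of_real A hperv f hf hfre x y h
      · exact pervasive_dense_of_real A hperv f hf hfre y x h
    apply hproper
    rw [Algebra.eq_top_iff]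
    intro g
    have hg := hdense g
    rwa [hclosed.closure_eq] at hg
  haveI : CompleteSpace A := hclosed.completeSpace_coe
  set a : A := ⟨u, hu⟩ with ha
  have hnu : ¬IsUnit a := by
    intro h
    obtain ⟨v, hv⟩ := h.exists_right_inv
    have hv' : u * (v : C(X, ℂ)) = 1 := congrArg Subtype.val hv
    have hpt : ∀ x : X, u x * (v : C(X, ℂ)) x = 1 := by
      intro x
      have h1 := ContinuousMap.congr_fun hv' x
      simpa using h1
    have hvconj : ∀ x : X, (v : C(X, ℂ)) x = (starRingEnd ℂ) (u x) := by
      intro x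
      have h2 : (starRingEnd ℂ) (u x) * u x = 1 := by
        rw [mul_comm, Complex.mul_conj]
        norm_cast
        rw [Complex.normSq_eq_norm_sq, humod x]
        norm_num
      calc (v : C(X, ℂ)) x = 1 * (v : C(X, ℂ)) x := (one_mul _).symm
        _ = ((starRingEnd ℂ) (u x) * u x) * (v : C(X, ℂ)) x := by rw [h2]
        _ = (starRingEnd ℂ) (u x) * (u x * (v : C(X, ℂ)) x) := by ring
        _ = (starRingEnd ℂ) (u x) := by rw [hpt x, mul_one]
    set f₁ : C(X, ℂ) := u + (v : C(X, ℂ)) with hf₁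
    have hf₁A : f₁ ∈ A := A.add_mem hu v.2
    have hf₁re : ∀ x : X, (f₁ x).im = 0 := by
      intro x
      simp [hf₁, hvconj x]
    set f₂ : C(X, ℂ) := Complex.I • (u - (v : C(X, ℂ))) with hf₂
    have hf₂A : f₂ ∈ A := A.smul_mem (A.sub_mem hu v.2) Complex.I
    have hf₂re : ∀ x : X, (f₂ x).im = 0 := by
      intro x
      simp [hf₂, hvconj x, Complex.mul_im, Complex.sub_re]
    obtain ⟨x1, y1, hxy⟩ := hunc
    have e1 : f₁ x1 = f₁ y1 := hconst f₁ hf₁A hf₁re x1 y1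
    have e2 : f₂ x1 = f₂ y1 := hconst f₂ hf₂A hf₂re x1 y1
    simp only [hf₁, hf₂, ContinuousMap.add_apply, ContinuousMap.smul_apply,
      ContinuousMap.sub_apply, smul_eq_mul] at e1 e2
    have e2' : u x1 - (v : C(X, ℂ)) x1 = u y1 - (v : C(X, ℂ)) y1 :=
      mul_left_cancel₀ Complex.I_ne_zero e2
    exact hxy (by linear_combination (e1 + e2') / 2)
  obtain ⟨φ₀, hφ₀⟩ := WeakDual.CharacterSpace.exists_apply_eq_zero hnu
  refine ⟨WeakDual.CharacterSpace.equivAlgHom φ₀, fun x => ⟨a, ?_⟩⟩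
  have h1 : WeakDual.CharacterSpace.equivAlgHom φ₀ a = 0 := by
    rw [WeakDual.CharacterSpace.equivAlgHom_coe]
    exact hφ₀
  have h2 : (a : C(X, ℂ)) x = u x := rfl
  rw [h1, h2]
  intro h0
  have habs := humod x
  rw [← h0] at habs
  simp at habs
end

section
/- Let A be a uniform algebra on a compact Hausdorff space X and let φ₁, …, φₙ be distinct characters of A, none of which is evaluation at a point of X, and fix x ∈ X which is not an isolated point of X. Assume there exists u ∈ A with |u| ≡ 1 on X and φⱼ(u) = 0 for all j, and assume A is pervasive. Then the closed subalgebra A_n = {f ∈ A : φⱼ(f) = f(x) for j = 1, …, n} is pervasive on X: for every closed F with ∅ ≠ F ⊊ X, the restrictions of A_n to F are dense in C(F). -/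
variable {X : Type} [TopologicalSpace X] [CompactSpace X] [T2Space X]

set_option synthInstance.maxHeartbeats 200000 in
/-- Given finitely many distinct characters `φ j` of a pervasive algebra `A`, none of
which is an evaluation at a point of `X`, a non-isolated point `x ∈ X`, and a unimodular
`u ∈ A` with `φ j u = 0` for all `j`, the algebra
`Aₙ = {f ∈ A : φ j f = f x for all j}` is pervasive on `X`. -/
theorem stmt_15 (A : Subalgebra ℂ C(X, ℂ))
    (hclosed : IsClosed (A : Set C(X, ℂ)))
    (hsep : ∀ x y : X, x ≠ y → ∃ f ∈ A, f x ≠ f y)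
    (hperv : Pervasive A)
    (n : ℕ) (φ : Fin n → (A →ₐ[ℂ] ℂ))
    (hdistinct : Function.Injective φ)
    (hnoteval : ∀ j : Fin n, ∀ y : X, ∃ f : A, φ j f ≠ (f : C(X, ℂ)) y)
    (x : X) (hx : ¬ IsOpen ({x} : Set X))
    (u : A) (humod : ∀ y : X, ‖(u : C(X, ℂ)) y‖ = 1)
    (huφ : ∀ j : Fin n, φ j u = 0) :
    ∀ F : Set X, IsClosed F → F.Nonempty → F ≠ Set.univ →
      Dense ((fun f : C(X, ℂ) => f.restrict F) ''
        {f : C(X, ℂ) | ∃ hf : f ∈ A, ∀ j : Fin n, φ j ⟨f, hf⟩ = f x}) := by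
  intro F hF hFne hFproper
  haveI : CompactSpace F := isCompact_iff_compactSpace.mp hF.isCompact
  intro g
  rw [Metric.mem_closure_iff]
  intro eps heps
  -- Step 1: approximate g by k ∈ A on F
  obtain ⟨k', ⟨k, hkA, rfl⟩, hkdist⟩ :=
    Metric.mem_closure_iff.mp (hperv F hF hFne hFproper g) (eps / 2) (by positivity)
  set M : ℝ := ‖k‖ with hM
  have hMnn : 0 ≤ M := norm_nonneg k
  set δ : ℝ := eps / (3 * (2 * M + 1)) with hδ
  have hδpos : 0 < δ := by positivity
  -- Step 2: approximate conj(u) by h ∈ A on F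
  set v : C(X, ℂ) := star (u : C(X, ℂ)) with hv
  obtain ⟨h', ⟨h, hhA, rfl⟩, hhdist⟩ :=
    Metric.mem_closure_iff.mp (hperv F hF hFne hFproper (v.restrict F)) δ hδpos
  -- the candidate element
  set kA : A := ⟨k, hkA⟩ with hkAdef
  set hA : A := ⟨h, hhA⟩ with hhAdef
  set GA : A := algebraMap ℂ A (k x) + (kA - algebraMap ℂ A (k x)) * hA * u with hGA
  set G : C(X, ℂ) := (GA : C(X, ℂ)) with hG
  have hGmem : G ∈ A := GA.2
  have hGx : G x = k x := by
    simp only [hG, hGA, Subalgebra.coe_add, Subalgebra.coe_mul, Subalgebra.coe_sub,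
      Subalgebra.coe_algebraMap, hkAdef, hhAdef]
    simp
  refine ⟨G.restrict F, ⟨G, ⟨hGmem, ?_⟩, rfl⟩, ?_⟩
  · intro j
    have : (⟨G, hGmem⟩ : A) = GA := rfl
    rw [this, hGx, hGA, map_add, map_mul, map_mul, huφ j, mul_zero, AlgHom.commutes]
    simp
  · -- the distance estimate
    rw [ContinuousMap.dist_lt_iff heps]
    intro y
    have h1 : dist (g y) (k y) < eps / 2 := by
      have := ContinuousMap.dist_apply_le_dist (f := g) (g := k.restrict F) y
      simp only [ContinuousMap.restrict_apply] at this
      exact lt_of_le_of_lt this hkdist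
    have h2 : dist (k (y : X)) (G (y : X)) ≤ eps / 3 := by
      have hGy : G (y : X) = k x + (k y - k x) * h y * (u : C(X, ℂ)) y := by
        simp only [hG, hGA, Subalgebra.coe_add, Subalgebra.coe_mul, Subalgebra.coe_sub,
          Subalgebra.coe_algebraMap, hkAdef, hhAdef]
        simp
      have hu1 : ‖(u : C(X, ℂ)) y‖ = 1 := humod y
      have hvh : ‖v (y : X) - h (y : X)‖ < δ := by
        have := ContinuousMap.dist_apply_le_dist (f := v.restrict F) (g := h.restrict F) y
        simp only [ContinuousMap.restrict_apply] at this
        have := lt_of_le_of_lt this hhdist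
        simpa [Complex.dist_eq] using this
      have key : ‖1 - h (y : X) * (u : C(X, ℂ)) y‖
          = ‖v (y : X) - h (y : X)‖ := by
        have huc : (starRingEnd ℂ) ((u : C(X, ℂ)) y) * ((u : C(X, ℂ)) y) = 1 := by
          rw [mul_comm, Complex.mul_conj]
          norm_cast
          rw [Complex.normSq_eq_norm_sq, hu1]
          norm_num
        have hvy : v (y : X) = (starRingEnd ℂ) ((u : C(X, ℂ)) y) := by
          simp [hv]
        calc ‖1 - h (y : X) * (u : C(X, ℂ)) y‖
            = ‖(u : C(X, ℂ)) y‖ *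
              ‖(starRingEnd ℂ) ((u : C(X, ℂ)) y) - h (y : X)‖ := by
              rw [← norm_mul]
              congr 1
              rw [mul_sub, mul_comm ((u : C(X, ℂ)) y) ((starRingEnd ℂ) ((u : C(X, ℂ)) y)), huc]
              ring
          _ = ‖v (y : X) - h (y : X)‖ := by rw [hu1, one_mul, hvy]
      have hky : ‖k (y : X) - k x‖ ≤ 2 * M := by
        have h1 : ‖k (y : X)‖ ≤ M := by
          simpa using k.norm_coe_le_norm (y : X)
        have h2 : ‖k x‖ ≤ M := by
          simpa using k.norm_coe_le_norm x
        calc ‖k (y : X) - k x‖ ≤ ‖k (y : X)‖ + ‖k x‖ :=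
              norm_sub_le _ _
          _ ≤ 2 * M := by linarith
      have hδM : 2 * M * δ ≤ eps / 3 := by
        have hne : (3 : ℝ) * (2 * M + 1) ≠ 0 := by positivity
        have : δ * (3 * (2 * M + 1)) = eps := div_mul_cancel₀ _ hne
        nlinarith [hδpos.le]
      calc dist (k (y : X)) (G (y : X))
          = ‖k (y : X) - k x‖ * ‖1 - h (y : X) * (u : C(X, ℂ)) y‖ := by
            rw [Complex.dist_eq, hGy, ← norm_mul]
            congr 1
            ring
        _ ≤ 2 * M * δ := by
            rw [key]
            exact mul_le_mul hky hvh.le (norm_nonneg _) (by linarith)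
        _ ≤ eps / 3 := hδM
    calc dist (g y) ((G.restrict F) y) = dist (g y) (G (y : X)) := by
          simp [ContinuousMap.restrict_apply]
      _ ≤ dist (g y) (k (y : X)) + dist (k (y : X)) (G (y : X)) := dist_triangle _ _ _
      _ < eps := by linarith
end

section
/- Let A be a maximal closed subalgebra of C(X) (X compact Hausdorff), and assume A is essential: every continuous function vanishing on a closed set E with the property that all functions vanishing on E lie in A forces E = X. Then A is pervasive: for every closed F with ∅ ≠ F ⊊ X, the restriction A|F is dense in C(F). -/
variable {X : Type} [TopologicalSpace X] [CompactSpace X] [T2Space X]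

/-- A maximal, essential uniform algebra on `X` is pervasive. -/
theorem stmt_19 (A : Subalgebra ℂ C(X, ℂ))
    (hclosed : IsClosed (A : Set C(X, ℂ)))
    (hsep : ∀ x y : X, x ≠ y → ∃ f ∈ A, f x ≠ f y)
    (hproper : A ≠ ⊤)
    (hmax : ∀ B : Subalgebra ℂ C(X, ℂ), IsClosed (B : Set C(X, ℂ)) → A ≤ B →
      B = A ∨ B = ⊤)
    (hess : ∀ E : Set X, IsClosed E → (∀ h : C(X, ℂ), (∀ x ∈ E, h x = 0) → h ∈ A) →
      E = Set.univ) :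
    Pervasive A := by
  intro F hF hFne hFne'
  haveI : CompactSpace F := isCompact_iff_compactSpace.mp hF.isCompact
  -- restriction as an algebra hom
  let ι : C(F, X) := ⟨Subtype.val, continuous_subtype_val⟩
  let φ : C(X, ℂ) →ₐ[ℂ] C(F, ℂ) := ContinuousMap.compRightAlgHom ℂ ℂ ι
  have hφcont : Continuous φ := ContinuousMap.continuous_precomp ι
  have hφeq : ∀ f : C(X, ℂ), φ f = f.restrict F := fun f => rfl
  -- B = preimage of the closure of A|F
  let C : Subalgebra ℂ C(F, ℂ) := (A.map φ).topologicalClosure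
  let B : Subalgebra ℂ C(X, ℂ) := C.comap φ
  have hBclosed : IsClosed (B : Set C(X, ℂ)) :=
    (Subalgebra.isClosed_topologicalClosure _).preimage hφcont
  have hAB : A ≤ B := by
    intro f hf
    exact Subalgebra.le_topologicalClosure _ ⟨f, hf, rfl⟩
  have himg : ((fun f : C(X, ℂ) => f.restrict F) '' (A : Set C(X, ℂ))) = (A.map φ : Set C(F, ℂ)) := by
    ext g
    simp [Subalgebra.mem_map, Set.mem_image, hφeq, eq_comm]
  rcases hmax B hBclosed hAB with hBA | hBtop
  · -- B = A : every function vanishing on F lies in A, contradicting F ≠ univ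
    exfalso
    apply hFne'
    apply hess F hF
    intro h hh
    have hres : φ h = 0 := by
      ext x
      exact hh x x.2
    have : h ∈ B := by
      show φ h ∈ C
      rw [hres]
      exact C.zero_mem
    rwa [hBA] at this
  · -- B = ⊤ : by Tietze, every g ∈ C(F,ℂ) is a restriction, hence in the closure
    rw [himg, dense_iff_closure_eq]
    refine Set.eq_univ_of_forall fun g => ?_
    obtain ⟨f, hf⟩ := g.exists_restrict_eq hF
    have hfB : f ∈ B := by rw [hBtop]; trivial
    have hC : φ f ∈ C := hfB
    rw [← Subalgebra.topologicalClosure_coe] at *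
    rw [hφeq, hf] at hC
    exact hC
end
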